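/- arXiv:2305.05096 — 5 statements merged into one kernel-verified Lean document; each statement's English description precedes it below -/
import Mathlib

section
/- For every integer n ≥ 2, the number f(n) of partitions of n that have a fixed point equals Σ_{m≥1} M(m,n), the number of partitions of n with positive crank. -/
/-- `l` is a partition of `n`: a nonincreasing list of positive integers summing to `n`. -/
noncomputable def IsPartitionOf (n : ℕ) (l : List ℕ) : Prop :=
  l.Pairwise (· ≥ ·) ∧ (∀ x ∈ l, 0 < x) ∧ l.sum = n

/-- The partition `l` has a `k`-fixed point: `λ_i = i + k` for some (1-indexed) index `i`. -/
noncomputable def HasKFixedPoint (k : ℤ) (l : List ℕ) : Prop :=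
  ∃ i : Fin l.length, (l.get i : ℤ) = (i.val : ℤ) + 1 + k

/-- `f_k(n)`: the number of partitions of `n` with a `k`-fixed point. -/
noncomputable def fk (k : ℤ) (n : ℕ) : ℕ :=
  {l : List ℕ | IsPartitionOf n l ∧ HasKFixedPoint k l}.ncard

/-- `g_k(n)`: the number of partitions of `n` without a `k`-fixed point. -/
noncomputable def gk (k : ℤ) (n : ℕ) : ℕ :=
  {l : List ℕ | IsPartitionOf n l ∧ ¬ HasKFixedPoint k l}.ncard

/-- `mex_j(l)`: the smallest integer greater than `j` that is not a part of `l`. -/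
noncomputable def mexJ (j : ℕ) (l : List ℕ) : ℕ := sInf {m : ℕ | j < m ∧ m ∉ l}

/-- Dyson's crank of a partition. -/
noncomputable def crank (l : List ℕ) : ℤ :=
  if l.count 1 = 0 then (l.headI : ℤ)
  else ((l.filter (fun x => l.count 1 < x)).length : ℤ) - (l.count 1 : ℤ)

/-- `M(m,n)`: the number of partitions of `n` with crank `m`. -/
noncomputable def M (m : ℤ) (n : ℕ) : ℕ :=
  {l : List ℕ | IsPartitionOf n l ∧ crank l = m}.ncard

/-- `p(n)`: the number of partitions of `n`. -/
noncomputable def partitionCount (n : ℕ) : ℕ := {l : List ℕ | IsPartitionOf n l}.ncard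

/-- `p(n,j)`: the number of partitions of `n` into at most `j` parts. -/
noncomputable def pAtMost (n : ℕ) (j : ℤ) : ℕ :=
  {l : List ℕ | IsPartitionOf n l ∧ (l.length : ℤ) ≤ j}.ncard

/-- `g'_{-k}(n)`: partitions of `n` with at least `k` parts and no `-k`-fixed point. -/
noncomputable def gneg (k : ℕ) (n : ℕ) : ℕ :=
  {l : List ℕ | IsPartitionOf n l ∧ k ≤ l.length ∧
    ∀ i : Fin l.length, (l.get i : ℤ) ≠ (i.val : ℤ) + 1 - k}.ncard

/-- `(q;q)_i = ∏_{m=1}^{i} (1 - q^m)` as a formal power series over `ℤ`. -/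
noncomputable def qPoch (i : ℕ) : PowerSeries ℤ :=
  ∏ m ∈ Finset.range i, (1 - PowerSeries.X ^ (m + 1))

namespace HS


lemma sorted_le {l : List ℕ} (hs : l.Pairwise (· ≥ ·)) {i j : ℕ} (hij : i ≤ j)
    (hj : j < l.length) : l[j] ≤ l[i]'(lt_of_le_of_lt hij hj) := by
  rcases eq_or_lt_of_le hij with rfl | h
  · exact le_rfl
  · exact List.pairwise_iff_get.1 hs ⟨i, lt_of_le_of_lt hij hj⟩ ⟨j, hj⟩ h

/-- Durfee square size -/
def dur (l : List ℕ) : ℕ := Nat.findGreatest (fun i => i ≤ l.getD (i-1) 0) l.length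

lemma dur_le_length (l : List ℕ) : dur l ≤ l.length := Nat.findGreatest_le _

lemma dur_spec (l : List ℕ) : dur l ≤ l.getD (dur l - 1) 0 := by
  exact Nat.findGreatest_spec (P := fun i => i ≤ l.getD (i-1) 0) (Nat.zero_le l.length) (by simp)

lemma one_le_dur {l : List ℕ} (hp : ∀ x ∈ l, 0 < x) (hl : l ≠ []) : 1 ≤ dur l := by
  have h0 : 0 < l.length := List.length_pos_iff.2 hl
  apply Nat.le_findGreatest h0
  show 1 ≤ l.getD 0 0
  rw [List.getD_eq_getElem l 0 h0]
  exact hp l[0] (List.getElem_mem h0)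

/-- getElem version of dur_spec -/
lemma dur_getElem {l : List ℕ} (hp : ∀ x ∈ l, 0 < x) (hl : l ≠ []) :
    dur l ≤ l[dur l - 1]'(by
      have := dur_le_length l
      have := one_le_dur hp hl
      omega) := by
  have h := dur_spec l
  have hlt : dur l - 1 < l.length := by
    have := dur_le_length l; have := one_le_dur hp hl; omega
  rwa [List.getD_eq_getElem l 0 hlt] at h

/-- beyond dur, parts are small -/
lemma getElem_dur_le {l : List ℕ} (h : dur l < l.length) : l[dur l] ≤ dur l := by
  by_contra hc
  push_neg at hc
  have := Nat.findGreatest_is_greatest (P := fun i => i ≤ l.getD (i-1) 0)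
    (Nat.lt_succ_self (dur l)) (by omega : dur l + 1 ≤ l.length)
  apply this
  show dur l + 1 ≤ l.getD (dur l + 1 - 1) 0
  have : dur l + 1 - 1 = dur l := by omega
  rw [this, List.getD_eq_getElem l 0 h]
  omega

/-- characterization: dur l = d -/
lemma dur_eq {l : List ℕ} (hs : l.Pairwise (· ≥ ·)) {d : ℕ} (hd1 : 1 ≤ d)
    (hdl : d ≤ l.length) (hspec : d ≤ l[d-1]'(by omega))
    (hnext : d = l.length ∨ (∀ h : d < l.length, l[d] ≤ d)) : dur l = d := by
  have hge : d ≤ dur l := by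
    apply Nat.le_findGreatest hdl
    show d ≤ l.getD (d-1) 0
    rw [List.getD_eq_getElem l 0 (show d - 1 < l.length by omega)]
    exact hspec
  rcases Nat.lt_or_ge d (dur l) with h | h
  · exfalso
    have hdur : dur l ≤ l.length := dur_le_length l
    have hdlt : d < l.length := lt_of_lt_of_le h hdur
    rcases hnext with rfl | hn
    · omega
    · have h1 : dur l ≤ l.getD (dur l - 1) 0 := dur_spec l
      have h2 : dur l - 1 < l.length := by omega
      rw [List.getD_eq_getElem l 0 h2] at h1
      have h3 : l[dur l - 1] ≤ l[d]'hdlt := sorted_le hs (by omega) h2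
      have := hn hdlt
      omega
  · omega


lemma hasfix_iff {l : List ℕ} (hs : l.Pairwise (· ≥ ·)) (hp : ∀ x ∈ l, 0 < x) (hl : l ≠ []) :
    HasKFixedPoint 0 l ↔ l[dur l - 1]'(by
      have := dur_le_length l; have := one_le_dur hp hl; omega) = dur l := by
  have hd1 := one_le_dur hp hl
  have hdl := dur_le_length l
  constructor
  · rintro ⟨⟨i, hi⟩, hfix⟩
    simp only [List.get_eq_getElem] at hfix
    have hval : l[i] = i + 1 := by exact_mod_cast hfix
    -- dur ≥ i+1
    have hge : i + 1 ≤ dur l := by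
      apply Nat.le_findGreatest (by omega)
      show i + 1 ≤ l.getD (i+1-1) 0
      have : i + 1 - 1 = i := by omega
      rw [this, List.getD_eq_getElem l 0 hi]
      omega
    -- l[dur-1] ≤ l[i] = i+1 ≤ dur
    have hle : l[dur l - 1]'(by omega) ≤ l[i] := sorted_le hs (by omega) (by omega)
    have hspec := dur_getElem hp hl
    omega
  · intro h
    refine ⟨⟨dur l - 1, by omega⟩, ?_⟩
    simp only [List.get_eq_getElem]
    push_cast
    rw [h]
    push_cast
    omega

/-- prefix property of counting large parts in sorted lists -/
lemma countP_prefix {l : List ℕ} (hs : l.Pairwise (· ≥ ·)) (w : ℕ) {i : ℕ} (hi : i < l.length) :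
    w < l[i] ↔ i < l.countP (fun x => decide (w < x)) := by
  constructor
  · intro h
    have hsplit : l = l.take (i+1) ++ l.drop (i+1) := (List.take_append_drop _ _).symm
    have hlen : (l.take (i+1)).length = i+1 := by
      rw [List.length_take]; omega
    have hall : ∀ a ∈ l.take (i+1), (fun x => decide (w < x)) a = true := by
      intro a ha
      rw [List.mem_iff_getElem] at ha
      obtain ⟨j, hj, rfl⟩ := ha
      have hj' : j < i + 1 := by omega
      rw [List.getElem_take]
      have : l[i] ≤ l[j]'(by omega) := sorted_le hs (by omega) hi
      simp; omega
    calc i < i + 1 := by omega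
      _ = (l.take (i+1)).countP (fun x => decide (w < x)) := by
          rw [List.countP_eq_length.2 hall, hlen]
      _ ≤ l.countP (fun x => decide (w < x)) := by
          conv_rhs => rw [hsplit]
          rw [List.countP_append]; omega
  · intro h
    by_contra hc
    push_neg at hc
    have hzero : (l.drop i).countP (fun x => decide (w < x)) = 0 := by
      apply List.countP_eq_zero.2
      intro a ha
      rw [List.mem_iff_getElem] at ha
      obtain ⟨j, hj, rfl⟩ := ha
      rw [List.getElem_drop]
      have : l[i + j]'(by rw [List.length_drop] at hj; omega) ≤ l[i] :=
        sorted_le hs (by omega) (by rw [List.length_drop] at hj; omega)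
      simp; omega
    have hsplit : l = l.take i ++ l.drop i := (List.take_append_drop _ _).symm
    have : l.countP (fun x => decide (w < x)) ≤ i := by
      conv_lhs => rw [hsplit]
      rw [List.countP_append, hzero]
      have : (l.take i).length = min i l.length := List.length_take
      have := List.countP_le_length (l := l.take i) (p := fun x => decide (w < x))
      omega
    omega


lemma crank_iff {l : List ℕ} (hs : l.Pairwise (· ≥ ·)) (hp : ∀ x ∈ l, 0 < x) (hl : l ≠ []) :
    1 ≤ crank l ↔ l.count 1 < dur l := by
  have hd1 := one_le_dur hp hl
  have hdl := dur_le_length l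
  by_cases hw : l.count 1 = 0
  · apply iff_of_true
    · rw [crank, if_pos hw]
      obtain ⟨a, t, rfl⟩ := List.exists_cons_of_ne_nil hl
      have := hp a List.mem_cons_self
      simp only [List.headI]
      exact_mod_cast this
    · omega
  · set w := l.count 1 with hwdef
    have hwle : w ≤ l.length := (List.count_le_length : l.count 1 ≤ l.length)
    have hcrank : crank l = ((l.countP (fun x => decide (w < x)) : ℤ)) - (w : ℤ) := by
      rw [crank, if_neg hw, List.countP_eq_length_filter]
    rcases Nat.lt_or_ge w l.length with hwl | hwl
    · rw [hcrank]
      have h1 : w < l[w] ↔ w < l.countP (fun x => decide (w < x)) := countP_prefix hs w hwl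
      have h2 : w < dur l ↔ w < l[w] := by
        constructor
        · intro h
          have hsp : dur l ≤ l[w] := by
            have h3 := sorted_le hs (show w ≤ dur l - 1 by omega)
              (show dur l - 1 < l.length by omega)
            exact le_trans (dur_getElem hp hl) h3
          omega
        · intro h
          have : w + 1 ≤ dur l := by
            apply Nat.le_findGreatest (by omega)
            show w + 1 ≤ l.getD (w+1-1) 0
            have he : w + 1 - 1 = w := by omega
            rw [he, List.getD_eq_getElem l 0 hwl]
            omega
          omega
      constructor
      · intro h
        rw [h2, h1]
        omega
      · intro h
        rw [h2, h1] at h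
        omega
    · -- all parts are 1
      have hweq : w = l.length := by omega
      have hall : ∀ b ∈ l, 1 = b := List.count_eq_length.1 (by omega)
      apply iff_of_false
      · rw [hcrank]
        have hc0 : l.countP (fun x => decide (w < x)) = 0 := by
          apply List.countP_eq_zero.2
          intro a ha
          have := (hall a ha).symm
          simp [this]
          omega
        rw [hc0]
        have : 1 ≤ w := by omega
        push_cast
        omega
      · have hdur1 : dur l = 1 := by
          apply dur_eq hs le_rfl (by omega)
          · exact hp _ (List.getElem_mem _)
          · rcases Nat.lt_or_ge 1 l.length with h | h
            · right; intro hh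
              exact le_of_eq (hall _ (List.getElem_mem hh)).symm
            · left; omega
        omega


/-- helper: sum of a list after subtracting t from each element -/
lemma sum_map_sub {u : List ℕ} {t : ℕ} (h : ∀ x ∈ u, t ≤ x) :
    (u.map (fun x => x - t)).sum + u.length * t = u.sum := by
  induction u with
  | nil => simp
  | cons a v ih =>
    have ha := h a List.mem_cons_self
    have ihv := ih (fun x hx => h x (List.mem_cons_of_mem a hx))
    simp only [List.map_cons, List.sum_cons, List.length_cons, Nat.add_mul, Nat.one_mul]
    omega

lemma sum_map_add (u : List ℕ) (t : ℕ) :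
    (u.map (fun x => x + t)).sum = u.sum + u.length * t := by
  induction u with
  | nil => simp
  | cons a v ih => simp only [List.map_cons, List.sum_cons, List.length_cons, ih]; ring

/-- in a sorted positive list, the last `count 1` entries are 1 -/
lemma trailing_ones {v : List ℕ} (hs : v.Pairwise (· ≥ ·)) (hp : ∀ x ∈ v, 0 < x)
    {i : ℕ} (h1 : v.length - v.count 1 ≤ i) (h2 : i < v.length) : v[i] = 1 := by
  by_contra hv
  have hpos : 0 < v[i] := hp _ (List.getElem_mem h2)
  have h2le : 2 ≤ v[i] := by omega
  have hsplit : v = v.take (i+1) ++ v.drop (i+1) := (List.take_append_drop _ _).symm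
  have hc1 : (v.take (i+1)).count 1 = 0 := by
    rw [List.count_eq_zero]
    intro hmem
    rw [List.mem_take_iff_getElem] at hmem
    obtain ⟨j, hj, hje⟩ := hmem
    have hjl : j < v.length := lt_of_lt_of_le hj (min_le_right _ _)
    have : v[i] ≤ v[j] := sorted_le hs (by omega : j ≤ i) h2
    omega
  have hc2 : (v.drop (i+1)).count 1 ≤ v.length - (i+1) := by
    have : (v.drop (i+1)).count 1 ≤ (v.drop (i+1)).length := List.count_le_length
    rwa [List.length_drop] at this
  have : v.count 1 = (v.take (i+1)).count 1 + (v.drop (i+1)).count 1 := by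
    conv_lhs => rw [hsplit]
    exact List.count_append
  omega

lemma ones_decomp {v : List ℕ} (hs : v.Pairwise (· ≥ ·)) (hp : ∀ x ∈ v, 0 < x)
    {k : ℕ} (hk : k ≤ v.count 1) : v.drop (v.length - k) = List.replicate k 1 := by
  have hkl : k ≤ v.length := le_trans hk (List.count_le_length : v.count 1 ≤ v.length)
  rw [List.eq_replicate_iff]
  constructor
  · rw [List.length_drop]; omega
  · intro b hb
    rw [List.mem_drop_iff_getElem] at hb
    obtain ⟨i, hi, rfl⟩ := hb
    exact trailing_ones hs hp (by omega) (by omega)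

/-- `t`-value of a partition -/
def tval (l : List ℕ) : ℕ := l.getD (dur l - 1) 0 - dur l

/-- The bijection: subtract t from the first d rows, append d*t ones. -/
def phi (l : List ℕ) : List ℕ :=
  (l.take (dur l)).map (fun x => x - tval l) ++
    (l.drop (dur l) ++ List.replicate (dur l * tval l) 1)

/-- The inverse map. -/
def recov (ν : List ℕ) : List ℕ :=
  (ν.take (dur ν)).map (fun x => x + ((ν.drop (dur ν)).count 1 / dur ν)) ++
    (ν.drop (dur ν)).take ((ν.drop (dur ν)).length - dur ν * ((ν.drop (dur ν)).count 1 / dur ν))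

section PhiSpec

variable {l : List ℕ}

-- basic abbreviation lemmas
lemma tval_spec (hp : ∀ x ∈ l, 0 < x) (hl : l ≠ []) :
    l[dur l - 1]'(by have := dur_le_length l; have := one_le_dur hp hl; omega)
      = dur l + tval l := by
  have h1 := dur_getElem hp hl
  have h2 : dur l - 1 < l.length := by
    have := dur_le_length l; have := one_le_dur hp hl; omega
  rw [tval, List.getD_eq_getElem l 0 h2]
  omega

lemma take_ge (hs : l.Pairwise (· ≥ ·)) (hp : ∀ x ∈ l, 0 < x) (hl : l ≠ []) :
    ∀ x ∈ l.take (dur l), dur l + tval l ≤ x := by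
  intro x hx
  rw [List.mem_take_iff_getElem] at hx
  obtain ⟨j, hj, rfl⟩ := hx
  have hd1 := one_le_dur hp hl
  have hdl := dur_le_length l
  have hjd : j < dur l := lt_of_lt_of_le hj (min_le_left _ _)
  have h2 : dur l - 1 < l.length := by omega
  have hle : l[dur l - 1] ≤ l[j]'(by omega) := sorted_le hs (by omega) h2
  have := tval_spec hp hl
  omega

lemma drop_le (hs : l.Pairwise (· ≥ ·)) : ∀ x ∈ l.drop (dur l), x ≤ dur l := by
  intro x hx
  rw [List.mem_drop_iff_getElem] at hx
  obtain ⟨i, hi, rfl⟩ := hx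
  have hdur : dur l < l.length := by omega
  have : l[dur l + i] ≤ l[dur l] := sorted_le hs (by omega) (by omega)
  have := getElem_dur_le hdur
  omega

lemma phi_sorted (hs : l.Pairwise (· ≥ ·)) (hp : ∀ x ∈ l, 0 < x) (hl : l ≠ []) : (phi l).Pairwise (· ≥ ·) := by
  have hd1 := one_le_dur hp hl
  unfold phi
  rw [List.pairwise_append, List.pairwise_append]
  refine ⟨?_, ⟨?_, ?_, ?_⟩, ?_⟩
  · exact List.Pairwise.map _ (fun a b hab => Nat.sub_le_sub_right hab _)
      (List.Pairwise.sublist (List.take_sublist _ _) hs)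
  · exact List.Pairwise.sublist (List.drop_sublist _ _) hs
  · exact List.pairwise_replicate.2 (Or.inr le_rfl)
  · intro a ha b hb
    have hb1 : b = 1 := List.eq_of_mem_replicate hb
    have ha1 : 0 < a := hp a (List.mem_of_mem_drop ha)
    omega
  · intro a ha b hb
    rw [List.mem_map] at ha
    obtain ⟨x, hx, rfl⟩ := ha
    have hxge := take_ge hs hp hl x hx
    have hble : b ≤ dur l := by
      rcases List.mem_append.1 hb with h | h
      · exact drop_le hs b h
      · rw [List.eq_of_mem_replicate h]; omega
    omega

lemma phi_pos (hs : l.Pairwise (· ≥ ·)) (hp : ∀ x ∈ l, 0 < x) (hl : l ≠ []) : ∀ x ∈ phi l, 0 < x := by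
  have hd1 := one_le_dur hp hl
  intro x hx
  unfold phi at hx
  rcases List.mem_append.1 hx with h | h
  · rw [List.mem_map] at h
    obtain ⟨y, hy, rfl⟩ := h
    have := take_ge hs hp hl y hy
    omega
  · rcases List.mem_append.1 h with h' | h'
    · exact hp x (List.mem_of_mem_drop h')
    · rw [List.eq_of_mem_replicate h']; omega

lemma phi_sum (hs : l.Pairwise (· ≥ ·)) (hp : ∀ x ∈ l, 0 < x) (hl : l ≠ []) : (phi l).sum = l.sum := by
  have hd1 := one_le_dur hp hl
  have hdl := dur_le_length l
  have htlen : (l.take (dur l)).length = dur l := by rw [List.length_take]; omega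
  have h1 : ((l.take (dur l)).map (fun x => x - tval l)).sum + dur l * tval l
      = (l.take (dur l)).sum := by
    have := sum_map_sub (u := l.take (dur l)) (t := tval l)
      (fun x hx => by have := take_ge hs hp hl x hx; omega)
    rwa [htlen] at this
  have h2 : (l.take (dur l)).sum + (l.drop (dur l)).sum = l.sum :=
    List.sum_take_add_sum_drop l (dur l)
  have h3 : (List.replicate (dur l * tval l) (1:ℕ)).sum = dur l * tval l := by
    rw [List.sum_replicate, smul_eq_mul, mul_one]
  unfold phi
  rw [List.sum_append, List.sum_append, h3]
  omega

lemma phi_length : (phi l).length = l.length + dur l * tval l := by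
  have hdl := dur_le_length l
  unfold phi
  simp [List.length_append, List.length_take, List.length_drop]
  omega

lemma phi_take : (phi l).take (dur l) = (l.take (dur l)).map (fun x => x - tval l) := by
  have hdl := dur_le_length l
  rw [phi, List.take_left']
  rw [List.length_map, List.length_take]
  omega

lemma phi_drop : (phi l).drop (dur l) = l.drop (dur l) ++ List.replicate (dur l * tval l) 1 := by
  have hdl := dur_le_length l
  rw [phi, List.drop_left']
  rw [List.length_map, List.length_take]
  omega

lemma phi_fix (hs : l.Pairwise (· ≥ ·)) (hp : ∀ x ∈ l, 0 < x) (hl : l ≠ []) : (phi l)[dur l - 1]'(by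
      have h := phi_length (l := l); have := dur_le_length l; have := one_le_dur hp hl
      rw [h]; omega) = dur l := by
  have hd1 := one_le_dur hp hl
  have hdl := dur_le_length l
  have hmlen : ((phi l).take (dur l)).length = dur l := by
    rw [phi_take, List.length_map, List.length_take]; omega
  have e1 : (phi l)[dur l - 1]'(by
        have h := phi_length (l := l); omega) = ((phi l).take (dur l))[dur l - 1]'(by omega) :=
    List.getElem_take.symm
  rw [e1, List.getElem_of_eq (phi_take (l := l)) (by omega), List.getElem_map,
    List.getElem_take, tval_spec hp hl]
  omega

lemma phi_dur (hs : l.Pairwise (· ≥ ·)) (hp : ∀ x ∈ l, 0 < x) (hl : l ≠ []) : dur (phi l) = dur l := by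
  have hd1 := one_le_dur hp hl
  have hdl := dur_le_length l
  have hlen := phi_length (l := l)
  have hsort := phi_sorted hs hp hl
  have hfix := phi_fix hs hp hl
  apply dur_eq hsort hd1 (by omega)
  · rw [hfix]
  · by_cases hcase : dur l = (phi l).length
    · exact Or.inl hcase
    · right
      intro h
      have := sorted_le hsort (show dur l - 1 ≤ dur l by omega) h
      rw [hfix] at this
      exact this


lemma map_sub_add {u : List ℕ} {t : ℕ} (h : ∀ x ∈ u, t ≤ x) :
    ((u.map (fun x => x - t)).map (fun x => x + t)) = u := by
  rw [List.map_map]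
  conv_rhs => rw [← List.map_id u]
  apply List.map_congr_left
  intro a ha
  have := h a ha
  simp only [Function.comp_apply, id_eq]
  omega

lemma map_add_sub (u : List ℕ) (t : ℕ) :
    ((u.map (fun x => x + t)).map (fun x => x - t)) = u := by
  rw [List.map_map]
  conv_rhs => rw [← List.map_id u]
  apply List.map_congr_left
  intro a ha
  simp only [Function.comp_apply, id_eq]
  omega

lemma phi_count {l : List ℕ} (hs : l.Pairwise (· ≥ ·)) (hp : ∀ x ∈ l, 0 < x) (hl : l ≠ [])
    (hB : l.count 1 < dur l) :
    ((phi l).drop (dur l)).count 1 = l.count 1 + dur l * tval l := by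
  have hd1 := one_le_dur hp hl
  rw [phi_drop, List.count_append, List.count_replicate]
  simp only [beq_self_eq_true, if_true]
  have htake0 : (l.take (dur l)).count 1 = 0 := by
    rw [List.count_eq_zero]
    intro hmem
    have hge := take_ge hs hp hl 1 hmem
    have h1l : (1:ℕ) ∈ l := List.mem_of_mem_take hmem
    have : 0 < l.count 1 := List.count_pos_iff.2 h1l
    omega
  have hsplit : l.count 1 = (l.take (dur l)).count 1 + (l.drop (dur l)).count 1 := by
    conv_lhs => rw [← List.take_append_drop (dur l) l]
    exact List.count_append
  omega

lemma phi_recov {l : List ℕ} (hs : l.Pairwise (· ≥ ·)) (hp : ∀ x ∈ l, 0 < x) (hl : l ≠ [])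
    (hB : l.count 1 < dur l) : recov (phi l) = l := by
  have hd1 := one_le_dur hp hl
  have hdl := dur_le_length l
  have hdphi : dur (phi l) = dur l := phi_dur hs hp hl
  have hcnt : ((phi l).drop (dur (phi l))).count 1 = l.count 1 + dur l * tval l := by
    rw [hdphi]; exact phi_count hs hp hl hB
  have ht : ((phi l).drop (dur (phi l))).count 1 / dur (phi l) = tval l := by
    rw [hcnt, hdphi, Nat.add_mul_div_left _ _ (by omega : 0 < dur l),
      Nat.div_eq_of_lt hB, Nat.zero_add]
  rw [recov, ht, hdphi]
  have h1 : ((phi l).take (dur l)).map (fun x => x + tval l) = l.take (dur l) := by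
    rw [phi_take]
    exact map_sub_add (fun x hx => by have := take_ge hs hp hl x hx; omega)
  have hlen2 : ((phi l).drop (dur l)).length - dur l * tval l = (l.drop (dur l)).length := by
    rw [phi_drop, List.length_append, List.length_replicate]
    omega
  have h2 : ((phi l).drop (dur l)).take (((phi l).drop (dur l)).length - dur l * tval l)
      = l.drop (dur l) := by
    rw [hlen2, phi_drop]
    exact List.take_left' rfl
  rw [h1, h2, List.take_append_drop]


lemma recov_core {ν : List ℕ} {d t m K : ℕ}
    (hs : ν.Pairwise (· ≥ ·)) (hp : ∀ x ∈ ν, 0 < x) (hsum : 2 ≤ ν.sum)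
    (hd1 : 1 ≤ d) (hdl : d ≤ ν.length)
    (hfix : ∀ h : d - 1 < ν.length, ν[d-1] = d)
    (hnext : ∀ h : d < ν.length, ν[d] ≤ d)
    (hd : dur ν = d) (hm : (ν.drop d).count 1 = m) (ht : m / d = t)
    (hK : (ν.drop d).length - d * t = K) :
    (recov ν).Pairwise (· ≥ ·) ∧ (∀ x ∈ recov ν, 0 < x) ∧ (recov ν).sum = ν.sum ∧
      recov ν ≠ [] ∧ (recov ν).count 1 < dur (recov ν) ∧ phi (recov ν) = ν := by
  have hrec : recov ν = (ν.take d).map (fun x => x + t) ++ (ν.drop d).take K := by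
    rw [recov, hd, hm, ht, hK]
  have hvs : (ν.drop d).Pairwise (· ≥ ·) := List.Pairwise.sublist (List.drop_sublist _ _) hs
  have hvp : ∀ x ∈ ν.drop d, 0 < x := fun x hx => hp x (List.mem_of_mem_drop hx)
  have hdt : d * t ≤ m := by
    rw [← ht, Nat.mul_comm]
    exact Nat.div_mul_le_self m d
  have hmv : m ≤ (ν.drop d).length := by rw [← hm]; exact List.count_le_length
  have hvlen : (ν.drop d).length = ν.length - d := List.length_drop
  have hdecomp : ν.drop d = (ν.drop d).take K ++ List.replicate (d * t) 1 := by
    have h := ones_decomp hvs hvp (k := d * t) (by omega)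
    rw [hK] at h
    conv_lhs => rw [← List.take_append_drop K (ν.drop d)]
    rw [h]
  have htakelen : ((ν.take d).map (fun x => x + t)).length = d := by
    rw [List.length_map, List.length_take]; omega
  have hTlen : ((ν.drop d).take K).length = K := by rw [List.length_take]; omega
  have htake_ge : ∀ x ∈ ν.take d, d ≤ x := by
    intro x hx
    rw [List.mem_take_iff_getElem] at hx
    obtain ⟨j, hj, rfl⟩ := hx
    have hjd : j < d := lt_of_lt_of_le hj (min_le_left _ _)
    have hle : ν[d - 1]'(by omega) ≤ ν[j]'(by omega) := sorted_le hs (by omega) (by omega)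
    have := hfix (by omega)
    omega
  have hvle : ∀ x ∈ ν.drop d, x ≤ d := by
    intro x hx
    rw [List.mem_drop_iff_getElem] at hx
    obtain ⟨i, hi, rfl⟩ := hx
    have h1 : ν[d + i] ≤ ν[d]'(by omega) := sorted_le hs (by omega) (by omega)
    have := hnext (by omega)
    omega
  -- sortedness
  have rsorted : (recov ν).Pairwise (· ≥ ·) := by
    rw [hrec, List.pairwise_append]
    refine ⟨?_, ?_, ?_⟩
    · exact List.Pairwise.map _ (fun a b hab => by omega)
        (List.Pairwise.sublist (List.take_sublist _ _) hs)
    · exact List.Pairwise.sublist ((List.take_sublist _ _).trans (List.drop_sublist _ _)) hs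
    · intro a ha b hb
      rw [List.mem_map] at ha
      obtain ⟨x, hx, rfl⟩ := ha
      have h1 := htake_ge x hx
      have h2 := hvle b (List.mem_of_mem_take hb)
      omega
  -- positivity
  have rpos : ∀ x ∈ recov ν, 0 < x := by
    intro x hx
    rw [hrec] at hx
    rcases List.mem_append.1 hx with h | h
    · rw [List.mem_map] at h
      obtain ⟨y, hy, rfl⟩ := h
      have := htake_ge y hy
      omega
    · exact hvp x (List.mem_of_mem_take h)
  -- length
  have rlen : (recov ν).length = d + K := by
    rw [hrec, List.length_append, htakelen, hTlen]
  -- sum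
  have rsum : (recov ν).sum = ν.sum := by
    have h1 : ((ν.take d).map (fun x => x + t)).sum = (ν.take d).sum + d * t := by
      rw [sum_map_add, List.length_take, min_eq_left hdl, Nat.mul_comm]
    have h2 : (ν.drop d).sum = ((ν.drop d).take K).sum + d * t := by
      conv_lhs => rw [hdecomp]
      rw [List.sum_append, List.sum_replicate, smul_eq_mul, mul_one]
    have h3 : (ν.take d).sum + (ν.drop d).sum = ν.sum := List.sum_take_add_sum_drop ν d
    rw [hrec, List.sum_append, h1]
    omega
  -- the fixed-point entry
  have rfix : ∀ h : d - 1 < (recov ν).length, (recov ν)[d-1] = d + t := by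
    intro h
    have hidx : d - 1 < ((ν.take d).map (fun x => x + t)).length := by
      rw [htakelen]; omega
    rw [List.getElem_of_eq hrec h, List.getElem_append_left hidx,
      List.getElem_map, List.getElem_take]
    rw [hfix (by omega)]
  -- durfee of recov
  have rdur : dur (recov ν) = d := by
    apply dur_eq rsorted hd1 (by omega)
    · rw [rfix (by omega)]; omega
    · by_cases hc : d = (recov ν).length
      · exact Or.inl hc
      · right
        intro h
        have hK1 : 1 ≤ K := by omega
        have hvne : 1 ≤ (ν.drop d).length := by omega
        have hdν : d < ν.length := by omega
        have e1 : (recov ν)[d] = ((ν.drop d).take K)[d - ((ν.take d).map (fun x => x + t)).length]'(by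
              rw [htakelen, hTlen]; omega) := by
          rw [List.getElem_of_eq hrec h, List.getElem_append_right (by rw [htakelen])]
        have e2 : ((ν.drop d).take K)[d - ((ν.take d).map (fun x => x + t)).length]'(by
              rw [htakelen, hTlen]; omega) = ((ν.drop d).take K)[0]'(by rw [hTlen]; omega) := by
          congr 1
          rw [htakelen]
          omega
        have e3 : ((ν.drop d).take K)[0]'(by rw [hTlen]; omega) = (ν.drop d)[0]'(by omega) :=
          List.getElem_take
        have e4 : (ν.drop d)[0]'(by omega) = ν[d + 0]'(by omega) := List.getElem_drop
        have e5 : ν[d + 0]'(by omega) = ν[d]'hdν := by congr 1 <;> omega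
        rw [e1, e2, e3, e4, e5]
        exact hnext hdν
  -- counting ones
  have hcntT : ((ν.drop d).take K).count 1 + d * t = m := by
    rw [← hm]
    conv_rhs => rw [hdecomp]
    rw [List.count_append, List.count_replicate]
    simp
  have hmod : m % d + d * (m / d) = m := Nat.mod_add_div m d
  have rcount : (recov ν).count 1 = m % d := by
    have hM0 : ((ν.take d).map (fun x => x + t)).count 1 = 0 := by
      rw [List.count_eq_zero]
      intro hmem
      rw [List.mem_map] at hmem
      obtain ⟨x, hx, hx1⟩ := hmem
      have hxd := htake_ge x hx
      have hd1' : d = 1 := by omega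
      have ht0 : t = 0 := by omega
      have hν0 : ν[0]'(by omega) = 1 := by
        have e : ν[0]'(by omega) = ν[d-1]'(by omega) := by congr 1; omega
        rw [e, hfix (by omega), hd1']
      have hallone : ∀ b ∈ ν, b = 1 := by
        intro b hb
        rw [List.mem_iff_getElem] at hb
        obtain ⟨j, hj, rfl⟩ := hb
        have h1 := sorted_le hs (Nat.zero_le j) hj
        have h2 := hp _ (List.getElem_mem hj)
        omega
      have hνrep : ν = List.replicate ν.length 1 := List.eq_replicate_iff.2 ⟨rfl, hallone⟩
      have hsumν : ν.sum = ν.length := by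
        conv_lhs => rw [hνrep]
        rw [List.sum_replicate, smul_eq_mul, mul_one]
      have hmval : m = (ν.drop d).length := by
        rw [← hm, List.count_eq_length.2 ?_]
        intro b hb
        exact (hallone b (List.mem_of_mem_drop hb)).symm
      have hm1 : 1 ≤ m := by omega
      have : m = t := by rw [← ht, hd1', Nat.div_one]
      omega
    have hmod' : m % d + d * t = m := by rw [← ht]; exact hmod
    rw [hrec, List.count_append, hM0, Nat.zero_add]
    omega
  -- tval of recov
  have rtval : tval (recov ν) = t := by
    rw [tval, rdur, List.getD_eq_getElem _ 0 (by omega : d - 1 < (recov ν).length),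
      rfix (by omega)]
    omega
  refine ⟨rsorted, rpos, rsum, ?_, ?_, ?_⟩
  · intro hnil
    rw [hnil] at rlen
    simp at rlen
    omega
  · rw [rcount, rdur]
    exact Nat.mod_lt m (by omega)
  · have e1 : (recov ν).take d = (ν.take d).map (fun x => x + t) := by
      rw [hrec]; exact List.take_left' htakelen
    have e2 : (recov ν).drop d = (ν.drop d).take K := by
      rw [hrec]; exact List.drop_left' htakelen
    rw [phi, rdur, rtval, e1, e2, map_add_sub, ← hdecomp, List.take_append_drop]


end PhiSpec
end HS

theorem stmt1 (n : ℕ) (hn : 2 ≤ n) :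
    fk 0 n = {l : List ℕ | IsPartitionOf n l ∧ 1 ≤ crank l}.ncard := by
  have hne : ∀ l : List ℕ, IsPartitionOf n l → l ≠ [] := by
    rintro l ⟨_, _, hsum⟩ rfl
    simp at hsum
    omega
  have himg : HS.phi '' {l : List ℕ | IsPartitionOf n l ∧ 1 ≤ crank l}
      = {l : List ℕ | IsPartitionOf n l ∧ HasKFixedPoint 0 l} := by
    apply Set.eq_of_subset_of_subset
    · rintro ν ⟨l, ⟨⟨hs, hp, hsum⟩, hcr⟩, rfl⟩
      have hl : l ≠ [] := hne l ⟨hs, hp, hsum⟩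
      have hB : l.count 1 < HS.dur l := (HS.crank_iff hs hp hl).1 hcr
      have hps := HS.phi_sorted hs hp hl
      have hpp := HS.phi_pos hs hp hl
      have hpsum : (HS.phi l).sum = n := by rw [HS.phi_sum hs hp hl, hsum]
      have hpne : HS.phi l ≠ [] := by
        intro h
        have h2 := HS.phi_length (l := l)
        rw [h] at h2
        simp at h2
        have : l.length = 0 := by omega
        rw [List.length_eq_zero_iff] at this
        exact hl this
      refine ⟨⟨hps, hpp, hpsum⟩, ?_⟩
      rw [HS.hasfix_iff hps hpp hpne]
      have hdur := HS.phi_dur hs hp hl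
      have hfix := HS.phi_fix hs hp hl
      have e : (HS.phi l)[HS.dur (HS.phi l) - 1]'(by
            have := HS.dur_le_length (HS.phi l)
            have := HS.one_le_dur hpp hpne
            omega) = (HS.phi l)[HS.dur l - 1]'(by
            have h1 := HS.phi_length (l := l)
            have := HS.dur_le_length l
            have := HS.one_le_dur hp hl
            omega) := by
        congr 1 <;> rw [hdur]
      rw [e, hfix, hdur]
    · rintro ν ⟨⟨hs, hp, hsum⟩, hfp⟩
      have hν : ν ≠ [] := hne ν ⟨hs, hp, hsum⟩
      have hfix0 := (HS.hasfix_iff hs hp hν).1 hfp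
      obtain ⟨rs, rp, rsum, rne, rcnt, rphi⟩ :=
        HS.recov_core (d := HS.dur ν) (t := (ν.drop (HS.dur ν)).count 1 / HS.dur ν)
          (m := (ν.drop (HS.dur ν)).count 1)
          (K := (ν.drop (HS.dur ν)).length
            - HS.dur ν * ((ν.drop (HS.dur ν)).count 1 / HS.dur ν))
          hs hp (by omega : 2 ≤ ν.sum) (HS.one_le_dur hp hν) (HS.dur_le_length ν)
          (fun _ => hfix0) (fun h => HS.getElem_dur_le h) rfl rfl rfl rfl
      refine ⟨HS.recov ν, ⟨⟨rs, rp, by rw [rsum, hsum]⟩, ?_⟩, rphi⟩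
      exact (HS.crank_iff rs rp rne).2 rcnt
  have hinj : Set.InjOn HS.phi {l : List ℕ | IsPartitionOf n l ∧ 1 ≤ crank l} := by
    rintro l₁ ⟨⟨hs₁, hp₁, hsum₁⟩, hcr₁⟩ l₂ ⟨⟨hs₂, hp₂, hsum₂⟩, hcr₂⟩ h
    have hl₁ : l₁ ≠ [] := hne l₁ ⟨hs₁, hp₁, hsum₁⟩
    have hl₂ : l₂ ≠ [] := hne l₂ ⟨hs₂, hp₂, hsum₂⟩
    have hB₁ : l₁.count 1 < HS.dur l₁ := (HS.crank_iff hs₁ hp₁ hl₁).1 hcr₁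
    have hB₂ : l₂.count 1 < HS.dur l₂ := (HS.crank_iff hs₂ hp₂ hl₂).1 hcr₂
    calc l₁ = HS.recov (HS.phi l₁) := (HS.phi_recov hs₁ hp₁ hl₁ hB₁).symm
      _ = HS.recov (HS.phi l₂) := by rw [h]
      _ = l₂ := HS.phi_recov hs₂ hp₂ hl₂ hB₂
  rw [fk, ← himg, Set.ncard_image_of_injOn hinj]
end

section
/- For every integer n ≥ 2, the number g(n) of partitions of n that have no fixed point equals Σ_{m≥0} M(m,n), the number of partitions of n with nonnegative crank. -/
namespace StmtTwo

/-- least `j` with `l_j < j+2` (where out-of-range entries are `0`). -/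
noncomputable def DD (l : List ℕ) : ℕ := sInf {j : ℕ | l.getD j 0 < j + 2}

lemma DD_le_length (l : List ℕ) : DD l ≤ l.length := by
  apply Nat.sInf_le
  simp [List.getD_eq_default]

lemma DD_spec (l : List ℕ) : l.getD (DD l) 0 < DD l + 2 := by
  have : DD l ∈ {j : ℕ | l.getD j 0 < j + 2} := by
    apply Nat.sInf_mem
    exact ⟨l.length, by simp [List.getD_eq_default]⟩
  exact this

lemma DD_lt {l : List ℕ} {j : ℕ} (h : j < DD l) : j + 2 ≤ l.getD j 0 := by
  have := Nat.notMem_of_lt_sInf h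
  simp only [Set.mem_setOf_eq, not_lt] at this
  exact this

lemma lt_length_of_lt_DD {l : List ℕ} {j : ℕ} (h : j < DD l) : j < l.length := by
  by_contra hc
  have := DD_lt h
  rw [List.getD_eq_default _ _ (le_of_not_gt hc)] at this
  omega

/-- sortedness gives monotone getD (descending), for valid larger index -/
lemma getD_anti {l : List ℕ} (hs : l.Pairwise (· ≥ ·)) {i j : ℕ} (hij : i ≤ j)
    (hj : j < l.length) : l.getD j 0 ≤ l.getD i 0 := by
  have hi : i < l.length := lt_of_le_of_lt hij hj
  rw [List.getD_eq_getElem _ _ hi, List.getD_eq_getElem _ _ hj]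
  rcases eq_or_lt_of_le hij with rfl | hlt
  · exact le_refl _
  · exact hs.rel_get_of_lt (show (⟨i, hi⟩ : Fin l.length) < ⟨j, hj⟩ from hlt)

/-- For sorted `l` with a (0-indexed) fixed point `l[i] = i+1`, `DD l = i`. -/
lemma DD_eq_of_fp {l : List ℕ} (hs : l.Pairwise (· ≥ ·)) {i : ℕ} (hi : i < l.length)
    (hfp : l[i] = i + 1) : DD l = i := by
  have hmem : i ∈ {j : ℕ | l.getD j 0 < j + 2} := by
    simp only [Set.mem_setOf_eq, List.getD_eq_getElem _ _ hi, hfp]; omega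
  have hle : DD l ≤ i := Nat.sInf_le hmem
  rcases eq_or_lt_of_le hle with h | h
  · exact h
  · exfalso
    have h1 := DD_spec l
    have h2 : l.getD i 0 ≤ l.getD (DD l) 0 := getD_anti hs (le_of_lt h) hi
    rw [List.getD_eq_getElem _ _ hi, hfp] at h2
    omega

end StmtTwo

namespace StmtTwo

/-- Forward map: delete the fixed-point part `d = DD l + 1` and append `d` ones. -/
noncomputable def Fm (l : List ℕ) : List ℕ :=
  l.take (DD l) ++ l.drop (DD l + 1) ++ List.replicate (DD l + 1) 1

/-- Inverse map: with `D = DD l`, remove `D+1` trailing ones and insert part `D+1`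
at position `D`. -/
noncomputable def Gm (l : List ℕ) : List ℕ :=
  l.take (DD l) ++ (DD l + 1) :: (l.drop (DD l)).take (l.length - DD l - (DD l + 1))

lemma mem_take_ge {l : List ℕ} (hs : l.Pairwise (· ≥ ·)) {x : ℕ}
    (hx : x ∈ l.take (DD l)) : DD l + 1 ≤ x := by
  rw [List.mem_iff_getElem] at hx
  obtain ⟨j, hj, rfl⟩ := hx
  have hj' : j < DD l ∧ j < l.length := by
    simp only [List.length_take, lt_min_iff] at hj; exact hj
  have hjlen : j < l.length := hj'.2
  have hjD : j < DD l := hj'.1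
  rw [List.getElem_take]
  have h1 : DD l - 1 < l.length := lt_length_of_lt_DD (by omega)
  have h2 := DD_lt (show DD l - 1 < DD l by omega)
  have h3 : l.getD (DD l - 1) 0 ≤ l.getD j 0 := getD_anti hs (by omega) h1
  rw [List.getD_eq_getElem _ _ hjlen] at h3
  omega

lemma mem_drop_le {l : List ℕ} (hs : l.Pairwise (· ≥ ·)) {x : ℕ}
    (hx : x ∈ l.drop (DD l)) : x ≤ DD l + 1 := by
  rw [List.mem_iff_getElem] at hx
  obtain ⟨j, hj, rfl⟩ := hx
  rw [List.getElem_drop]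
  have hlen : DD l + j < l.length := by simp only [List.length_drop] at hj; omega
  have h1 : l.getD (DD l + j) 0 ≤ l.getD (DD l) 0 := getD_anti hs (by omega) hlen
  have h2 := DD_spec l
  rw [List.getD_eq_getElem _ _ hlen] at h1
  omega

lemma mem_drop_succ_le {l : List ℕ} (hs : l.Pairwise (· ≥ ·)) {x : ℕ}
    (hx : x ∈ l.drop (DD l + 1)) : x ≤ DD l + 1 := by
  apply mem_drop_le hs
  have hsub : l.drop (DD l + 1) ⊆ l.drop (DD l) := by
    have : l.drop (DD l + 1) = List.drop 1 (l.drop (DD l)) := by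
      rw [List.drop_drop]
    rw [this]
    exact (List.drop_subset _ _)
  exact hsub hx

end StmtTwo

namespace StmtTwo

lemma DD_eq_of {l : List ℕ} {D : ℕ} (h1 : l.getD D 0 < D + 2)
    (h2 : ∀ j < D, j + 2 ≤ l.getD j 0) : DD l = D := by
  have hle : DD l ≤ D := Nat.sInf_le h1
  rcases eq_or_lt_of_le hle with h | h
  · exact h
  · have hA := DD_spec l
    have hB := h2 _ h
    omega

lemma forward {n : ℕ} {l : List ℕ} (hp : IsPartitionOf n l)
    (hfp : HasKFixedPoint 0 l) :
    IsPartitionOf n (Fm l) ∧ crank (Fm l) < 0 ∧ Gm (Fm l) = l := by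
  obtain ⟨hs, hpos, hsum⟩ := hp
  obtain ⟨i, hi⟩ := hfp
  have hilt : i.val < l.length := i.isLt
  have hfpn : l[i.val] = i.val + 1 := by
    have : (l.get i : ℤ) = (i.val : ℤ) + 1 + 0 := hi
    have := this
    push_cast at this
    exact_mod_cast this
  set D : ℕ := i.val with hDdef
  have hD : DD l = D := DD_eq_of_fp hs hilt hfpn
  set a : List ℕ := l.take D with ha
  set b : List ℕ := l.drop (D + 1) with hb
  have hlena : a.length = D := by
    rw [ha, List.length_take]; omega
  have hlenb : b.length = l.length - (D + 1) := by
    rw [hb, List.length_drop]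
  have hdecomp : l = a ++ (D + 1) :: b := by
    conv_lhs => rw [← List.take_append_drop D l]
    rw [List.drop_eq_getElem_cons hilt, hfpn]
  have ha_ge : ∀ x ∈ a, D + 1 ≤ x := by
    intro x hx
    have := mem_take_ge hs (by rw [hD]; exact hx)
    omega
  have hb_le : ∀ x ∈ b, x ≤ D + 1 := by
    intro x hx
    have := mem_drop_succ_le hs (l := l) (x := x) (by rw [hD]; exact hb ▸ hx)
    omega
  have hFm : Fm l = a ++ b ++ List.replicate (D + 1) 1 := by
    rw [Fm, hD]
  -- membership in Fm l
  have hmemF : ∀ x ∈ Fm l, (x ∈ a ∨ x ∈ b) ∨ x = 1 := by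
    intro x hx
    rw [hFm, List.mem_append, List.mem_append] at hx
    rcases hx with (h | h) | h
    · exact Or.inl (Or.inl h)
    · exact Or.inl (Or.inr h)
    · exact Or.inr (List.eq_of_mem_replicate h)
  have hposF : ∀ x ∈ Fm l, 0 < x := by
    intro x hx
    rcases hmemF x hx with (h | h) | h
    · exact hpos x (hdecomp ▸ (List.mem_append.2 (Or.inl h)))
    · exact hpos x (hdecomp ▸ (List.mem_append.2 (Or.inr (List.mem_cons_of_mem _ h))))
    · omega
  -- sortedness
  have hsa : a.Pairwise (· ≥ ·) := hs.sublist (List.take_sublist _ _)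
  have hsb : b.Pairwise (· ≥ ·) := hs.sublist (List.drop_sublist _ _)
  have hsF : (Fm l).Pairwise (· ≥ ·) := by
    rw [hFm]
    rw [List.pairwise_append, List.pairwise_append]
    refine ⟨⟨hsa, hsb, ?_⟩, ?_, ?_⟩
    · intro x hx y hy
      have h1 := ha_ge x hx
      have h2 := hb_le y hy
      omega
    · rw [List.pairwise_replicate]; right; exact le_refl _
    · intro x hx y hy
      have hy1 := List.eq_of_mem_replicate hy
      rcases List.mem_append.1 hx with h | h
      · have := ha_ge x h; omega
      · have := hpos x (hdecomp ▸ (List.mem_append.2 (Or.inr (List.mem_cons_of_mem _ h))))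
        omega
  -- sum
  have hsumF : (Fm l).sum = n := by
    have h1 : a.sum + ((D + 1) + b.sum) = n := by
      have := hdecomp ▸ hsum
      simpa [List.sum_append] using this
    rw [hFm]
    simp [List.sum_append, List.sum_replicate]
    omega
  -- count of ones
  have hcount : (Fm l).count 1 = a.count 1 + b.count 1 + (D + 1) := by
    rw [hFm, List.count_append, List.count_append, List.count_replicate]
    simp
  set w : ℕ := (Fm l).count 1 with hw
  have hwge : D + 1 ≤ w := by omega
  -- crank
  have hfiltb : b.filter (fun x => decide (w < x)) = [] := by
    apply List.filter_eq_nil_iff.2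
    intro x hx
    have := hb_le x hx
    simp only [decide_eq_true_eq, not_lt]
    omega
  have hfiltrep : (List.replicate (D + 1) 1).filter (fun x => decide (w < x)) = [] := by
    apply List.filter_eq_nil_iff.2
    intro x hx
    have := List.eq_of_mem_replicate hx
    simp only [decide_eq_true_eq, not_lt]
    omega
  have hfiltlen : ((Fm l).filter (fun x => w < x)).length ≤ D := by
    rw [hFm, List.filter_append, List.filter_append, hfiltb, hfiltrep]
    simp only [List.append_nil]
    calc (a.filter (fun x => decide (w < x))).length ≤ a.length := List.length_filter_le _ _
    _ = D := hlena
  have hcrank : crank (Fm l) < 0 := by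
    rw [crank, if_neg (by omega : ¬ (Fm l).count 1 = 0)]
    have : ((Fm l).filter (fun x => (Fm l).count 1 < x)).length ≤ D := hfiltlen
    have hwge' : D + 1 ≤ (Fm l).count 1 := hwge
    omega
  -- DD of Fm l
  have hlenF : (Fm l).length = l.length + D := by
    rw [hFm]
    simp [List.length_append, hlena, hlenb]
    omega
  have hDF : DD (Fm l) = D := by
    apply DD_eq_of
    · have hDlt : D < (Fm l).length := by omega
      rw [List.getD_eq_getElem _ _ hDlt]
      have hre : Fm l = a ++ (b ++ List.replicate (D + 1) 1) := by
        rw [hFm, List.append_assoc]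
      have : (Fm l)[D] ∈ b ++ List.replicate (D + 1) 1 := by
        rw [List.getElem_of_eq hre hDlt,
          List.getElem_append_right (by omega : a.length ≤ D)]
        apply List.getElem_mem
      rcases List.mem_append.1 this with h | h
      · have := hb_le _ h; omega
      · have := List.eq_of_mem_replicate h; omega
    · intro j hj
      have hjlt : j < (Fm l).length := by omega
      rw [List.getD_eq_getElem _ _ hjlt]
      have hre : Fm l = a ++ (b ++ List.replicate (D + 1) 1) := by
        rw [hFm, List.append_assoc]
      have hja : (Fm l)[j] = a[j]'(by omega) := by
        rw [List.getElem_of_eq hre hjlt,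
          List.getElem_append_left (by omega : j < a.length)]
      rw [hja]
      have : a[j]'(by omega) ∈ a := List.getElem_mem _
      -- need l[j] ≥ j+2 : use DD_lt
      have h2 := DD_lt (l := l) (j := j) (by omega)
      rw [List.getD_eq_getElem _ _ (by omega : j < l.length)] at h2
      have : a[j]'(by omega) = l[j]'(by omega) := List.getElem_take
      omega
  -- Gm (Fm l) = l
  have hGF : Gm (Fm l) = l := by
    rw [Gm, hDF]
    have ht1 : (Fm l).take D = a := by
      rw [hFm, List.append_assoc]
      exact List.take_left' hlena
    have ht2 : (Fm l).drop D = b ++ List.replicate (D + 1) 1 := by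
      rw [hFm, List.append_assoc]
      exact List.drop_left' hlena
    rw [ht1, ht2]
    have hamt : (Fm l).length - D - (D + 1) = b.length := by omega
    rw [hamt, List.take_left]
    exact hdecomp.symm
  exact ⟨⟨hsF, hposF, hsumF⟩, hcrank, hGF⟩

end StmtTwo

namespace StmtTwo

lemma countP_ge_of_take {μ : List ℕ} (p : ℕ → Bool) {k : ℕ} (hk : k ≤ μ.length)
    (h : ∀ x ∈ μ.take k, p x) : k ≤ μ.countP p := by
  have h1 : (μ.take k).countP p = (μ.take k).length := by
    rw [List.countP_eq_length_filter, List.filter_eq_self.2 h]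
  have h2 : (μ.take k).countP p ≤ μ.countP p := (List.take_sublist _ _).countP_le
  rw [List.length_take, min_eq_left hk] at h1
  omega

lemma mem_take_bound {μ : List ℕ} (hs : μ.Pairwise (· ≥ ·)) {k : ℕ} (hk : k ≤ μ.length)
    (hk1 : 1 ≤ k) {x : ℕ} (hx : x ∈ μ.take k) : μ.getD (k - 1) 0 ≤ x := by
  rw [List.mem_iff_getElem] at hx
  obtain ⟨j, hj, rfl⟩ := hx
  have hj' : j < k ∧ j < μ.length := by
    simp only [List.length_take, lt_min_iff] at hj; exact hj
  have := getD_anti hs (show j ≤ k - 1 by omega) (show k - 1 < μ.length by omega)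
  rw [List.getD_eq_getElem _ _ hj'.2] at this
  have he : (μ.take k)[j] = μ[j]'hj'.2 := List.getElem_take
  omega

lemma count_one_eq {μ : List ℕ} (hpos : ∀ x ∈ μ, 0 < x) :
    μ.count 1 = μ.countP (fun x => decide ¬ (2 ≤ x)) := by
  rw [List.count]
  apply List.countP_congr
  intro x hx
  have := hpos x hx
  simp only [beq_iff_eq, decide_eq_true_eq]
  omega

lemma backward {n : ℕ} {μ : List ℕ} (hp : IsPartitionOf n μ) (hc : crank μ < 0) :
    IsPartitionOf n (Gm μ) ∧ HasKFixedPoint 0 (Gm μ) ∧ Fm (Gm μ) = μ := by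
  obtain ⟨hs, hpos, hsum⟩ := hp
  set w : ℕ := μ.count 1 with hw
  -- w ≥ 1
  have hw1 : 1 ≤ w := by
    by_contra hcon
    have hw0 : μ.count 1 = 0 := by omega
    rw [crank, if_pos hw0] at hc
    rcases μ with _ | ⟨x, rest⟩
    · simp at hc
    · have : 0 < x := hpos x (List.mem_cons_self)
      simp only [List.headI] at hc
      omega
  have hcw : ((μ.filter (fun x => μ.count 1 < x)).length : ℤ) - (μ.count 1 : ℤ) < 0 := by
    rwa [crank, if_neg (by omega)] at hc
  set c : ℕ := (μ.filter (fun x => decide (w < x))).length with hcdef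
  have hclt : c < w := by
    have : ((μ.filter (fun x => decide (w < x))).length : ℤ) - (w : ℤ) < 0 := hcw
    omega
  set D : ℕ := DD μ with hD
  -- D + 1 ≤ w
  have hwD : D + 1 ≤ w := by
    by_contra hcon
    have hwD' : w ≤ D := by omega
    have hwlen : w ≤ μ.length := by
      have := lt_length_of_lt_DD (show w - 1 < DD μ by omega)
      omega
    have : w ≤ μ.countP (fun x => decide (w < x)) := by
      apply countP_ge_of_take _ hwlen
      intro x hx
      have h1 := mem_take_bound hs hwlen (by omega) hx
      have h2 := DD_lt (show w - 1 < DD μ by omega)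
      simp only [decide_eq_true_eq]
      omega
    rw [List.countP_eq_length_filter] at this
    omega
  have hwlen : w ≤ μ.length := List.count_le_length
  have hDlen : D < μ.length := by omega
  -- t = number of parts ≥ 2
  set t : ℕ := μ.countP (fun x => decide (2 ≤ x)) with ht
  have htw : t + w = μ.length := by
    have h1 := List.length_eq_countP_add_countP (fun x => decide (2 ≤ x)) (l := μ)
    have h2 := count_one_eq hpos
    have h3 : μ.countP (fun a => decide ¬(decide (2 ≤ a) = true))
        = μ.countP (fun x => decide ¬ (2 ≤ x)) := by
      apply List.countP_congr
      intro x hx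
      simp
    omega
  have htD : D ≤ t := by
    rcases Nat.eq_zero_or_pos D with h0 | hD1
    · omega
    · apply countP_ge_of_take _ (le_of_lt hDlen)
      intro x hx
      have h1 := mem_take_bound hs (le_of_lt hDlen) (by omega) hx
      have h2 := DD_lt (show D - 1 < DD μ by omega)
      simp only [decide_eq_true_eq]
      omega
  -- trailing entries are ones
  have hones : ∀ p, μ.length - w ≤ p → ∀ (hplt : p < μ.length), μ[p] = 1 := by
    intro p hple hplt
    by_contra hcon
    have hp2 : 2 ≤ μ[p] := by
      have := hpos μ[p] (List.getElem_mem _)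
      omega
    have : p + 1 ≤ t := by
      apply countP_ge_of_take _ (by omega)
      intro x hx
      have h1 := mem_take_bound hs (by omega) (by omega) hx
      rw [show p + 1 - 1 = p by omega, List.getD_eq_getElem _ _ hplt] at h1
      simp only [decide_eq_true_eq]
      omega
    omega
  -- decomposition
  set a : List ℕ := μ.take D with ha
  set r : List ℕ := μ.drop D with hr
  have hlena : a.length = D := by rw [ha, List.length_take]; omega
  have hlenr : r.length = μ.length - D := by rw [hr, List.length_drop]
  have hDd : D + (D + 1) ≤ μ.length := by omega
  set m : ℕ := μ.length - D - (D + 1) with hm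
  have hrdecomp : r = r.take m ++ List.replicate (D + 1) 1 := by
    conv_lhs => rw [← List.take_append_drop m r]
    congr 1
    rw [List.eq_replicate_iff]
    constructor
    · rw [List.length_drop]; omega
    · intro x hx
      rw [List.mem_iff_getElem] at hx
      obtain ⟨q, hq, rfl⟩ := hx
      have hq' : q < r.length - m := by simpa [List.length_drop] using hq
      have e1 : (r.drop m)[q] = r[m + q]'(by omega) := List.getElem_drop
      have e2 : r[m + q]'(by omega) = μ[D + (m + q)]'(by omega) := List.getElem_drop
      rw [e1, e2]
      exact hones _ (by omega) _
  set s : List ℕ := r.take m with hsdef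
  have hGm : Gm μ = a ++ (D + 1) :: s := by rw [Gm, ← hD, ← ha, ← hr, ← hm, ← hsdef]
  have ha_ge : ∀ x ∈ a, D + 1 ≤ x := fun x hx => mem_take_ge hs (by rw [hD] at ha; exact ha ▸ hx)
  have hr_le : ∀ x ∈ r, x ≤ D + 1 := fun x hx => mem_drop_le hs (by rw [hD] at hr; exact hr ▸ hx)
  have hs_le : ∀ x ∈ s, x ≤ D + 1 := fun x hx => hr_le x (List.take_subset _ _ hx)
  have hsub_a : ∀ x ∈ a, x ∈ μ := fun x hx => List.take_subset _ _ hx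
  have hsub_s : ∀ x ∈ s, x ∈ μ := fun x hx => List.drop_subset _ _ (List.take_subset _ _ hx)
  -- sortedness of Gm
  have hsa : a.Pairwise (· ≥ ·) := hs.sublist (List.take_sublist _ _)
  have hss : s.Pairwise (· ≥ ·) := (hs.sublist (List.drop_sublist _ _)).sublist (List.take_sublist _ _)
  have hsG : (Gm μ).Pairwise (· ≥ ·) := by
    rw [hGm, List.pairwise_append]
    refine ⟨hsa, ?_, ?_⟩
    · rw [List.pairwise_cons]
      exact ⟨fun y hy => hs_le y hy, hss⟩
    · intro x hx y hy
      rcases List.mem_cons.1 hy with rfl | hy'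
      · exact ha_ge x hx
      · have := hs_le y hy'
        have := ha_ge x hx
        omega
  -- positivity
  have hposG : ∀ x ∈ Gm μ, 0 < x := by
    intro x hx
    rw [hGm] at hx
    rcases List.mem_append.1 hx with h | h
    · exact hpos x (hsub_a x h)
    · rcases List.mem_cons.1 h with rfl | h'
      · omega
      · exact hpos x (hsub_s x h')
  -- sum
  have hsumG : (Gm μ).sum = n := by
    have h1 : a.sum + r.sum = n := by
      rw [ha, hr]
      rw [List.sum_take_add_sum_drop]
      exact hsum
    have h2 : r.sum = s.sum + (D + 1) := by
      conv_lhs => rw [hrdecomp]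
      rw [List.sum_append, List.sum_replicate]
      simp
    rw [hGm, List.sum_append, List.sum_cons]
    omega
  -- fixed point
  have hlenG : (Gm μ).length = D + 1 + s.length := by
    rw [hGm, List.length_append, hlena, List.length_cons]
    omega
  have hgetG : ∀ (h : D < (Gm μ).length), (Gm μ)[D] = D + 1 := by
    intro h
    have hre : Gm μ = a ++ (D + 1) :: s := hGm
    rw [List.getElem_of_eq hre h, List.getElem_append_right (by omega : a.length ≤ D)]
    simp [hlena]
  have hfpG : HasKFixedPoint 0 (Gm μ) := by
    refine ⟨⟨D, by omega⟩, ?_⟩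
    have := hgetG (by omega)
    simp only [List.get_eq_getElem]
    rw [this]
    push_cast
    ring
  -- Fm (Gm μ) = μ
  have hDG : DD (Gm μ) = D := DD_eq_of_fp hsG (by omega) (hgetG (by omega))
  have hFG : Fm (Gm μ) = μ := by
    rw [Fm, hDG]
    have ht1 : (Gm μ).take D = a := by
      rw [hGm]; exact List.take_left' hlena
    have ht2 : (Gm μ).drop (D + 1) = s := by
      rw [hGm, show a ++ (D + 1) :: s = (a ++ [D + 1]) ++ s by simp]
      exact List.drop_left' (by simp [hlena])
    rw [ht1, ht2, List.append_assoc, ← hrdecomp]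
    rw [ha, hr]
    exact List.take_append_drop _ _
  exact ⟨⟨hsG, hposG, hsumG⟩, hfpG, hFG⟩

end StmtTwo

namespace StmtTwo

lemma finite_partitions (n : ℕ) : {l : List ℕ | IsPartitionOf n l}.Finite := by
  haveI : IsAntisymm ℕ (· ≥ ·) := ⟨fun a b h1 h2 => le_antisymm h2 h1⟩
  apply Set.Finite.of_finite_image (f := fun l : List ℕ => (l : Multiset ℕ))
  · apply Set.Finite.subset (Set.finite_range (fun p : Nat.Partition n => p.parts))
    rintro m ⟨l, hl, rfl⟩
    refine ⟨⟨(l : Multiset ℕ), ?_, ?_⟩, rfl⟩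
    · intro i hi
      exact hl.2.1 i (by simpa using hi)
    · simpa using hl.2.2
  · intro l1 h1 l2 h2 he
    have hperm : l1.Perm l2 := Multiset.coe_eq_coe.1 he
    exact List.Perm.eq_of_pairwise (fun a b _ _ h1 h2 => le_antisymm h2 h1) h1.1 h2.1 hperm

theorem main (n : ℕ) :
    {l : List ℕ | IsPartitionOf n l ∧ ¬ HasKFixedPoint 0 l}.ncard
      = {l : List ℕ | IsPartitionOf n l ∧ 0 ≤ crank l}.ncard := by
  set S := {l : List ℕ | IsPartitionOf n l} with hSdef
  set A0 := {l : List ℕ | IsPartitionOf n l ∧ HasKFixedPoint 0 l} with hA0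
  set A1 := {l : List ℕ | IsPartitionOf n l ∧ ¬ HasKFixedPoint 0 l} with hA1
  set B0 := {l : List ℕ | IsPartitionOf n l ∧ crank l < 0} with hB0
  set B1 := {l : List ℕ | IsPartitionOf n l ∧ 0 ≤ crank l} with hB1
  have hS : S.Finite := finite_partitions n
  have hA0f : A0.Finite := hS.subset (fun l hl => hl.1)
  have hA1f : A1.Finite := hS.subset (fun l hl => hl.1)
  have hB0f : B0.Finite := hS.subset (fun l hl => hl.1)
  have hB1f : B1.Finite := hS.subset (fun l hl => hl.1)
  have hAunion : A0 ∪ A1 = S := by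
    ext l; simp only [hA0, hA1, hSdef, Set.mem_union, Set.mem_setOf_eq]; tauto
  have hBunion : B0 ∪ B1 = S := by
    ext l
    simp only [hB0, hB1, hSdef, Set.mem_union, Set.mem_setOf_eq]
    constructor
    · tauto
    · intro h; rcases lt_or_ge (crank l) 0 with h' | h' <;> tauto
  have hAdisj : Disjoint A0 A1 := by
    rw [Set.disjoint_left]; intro l h1 h2; exact h2.2 h1.2
  have hBdisj : Disjoint B0 B1 := by
    rw [Set.disjoint_left]; intro l h1 h2
    have := h1.2
    have := h2.2
    omega
  have hcardA : A0.ncard + A1.ncard = S.ncard := by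
    rw [← Set.ncard_union_eq hAdisj hA0f hA1f, hAunion]
  have hcardB : B0.ncard + B1.ncard = S.ncard := by
    rw [← Set.ncard_union_eq hBdisj hB0f hB1f, hBunion]
  have hbij : Set.BijOn Fm A0 B0 := by
    have hinv : Set.InvOn Gm Fm A0 B0 := by
      constructor
      · intro l hl
        exact (forward hl.1 hl.2).2.2
      · intro l hl
        exact (backward hl.1 hl.2).2.2
    apply hinv.bijOn
    · intro l hl
      exact ⟨(forward hl.1 hl.2).1, (forward hl.1 hl.2).2.1⟩
    · intro l hl
      exact ⟨(backward hl.1 hl.2).1, (backward hl.1 hl.2).2.1⟩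
  have hcore : A0.ncard = B0.ncard := by
    rw [← hbij.image_eq, Set.ncard_image_of_injOn hbij.injOn]
  omega

end StmtTwo

theorem stmt2 (n : ℕ) (hn : 2 ≤ n) :
    gk 0 n = {l : List ℕ | IsPartitionOf n l ∧ 0 ≤ crank l}.ncard := by
  rw [gk]
  exact StmtTwo.main n
end

section
/- For every integer n > 2, there are strictly more partitions of n without a fixed point than partitions of n with a fixed point; that is, g(n) > f(n). -/
namespace AuxStmt5

/-- antitone getD -/
lemma getD_anti {l : List ℕ} (hs : l.Pairwise (· ≥ ·)) {p q : ℕ} (h : p ≤ q) :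
    l.getD q 0 ≤ l.getD p 0 := by
  rcases lt_or_ge q l.length with hq | hq
  · have hp : p < l.length := lt_of_le_of_lt h hq
    rw [List.getD_eq_getElem _ _ hq, List.getD_eq_getElem _ _ hp]
    rcases eq_or_lt_of_le h with rfl | hlt
    · exact le_refl _
    · exact hs.rel_get_of_lt (a := ⟨p, hp⟩) (b := ⟨q, hq⟩) hlt
  · rw [List.getD_eq_default _ _ hq]
    exact Nat.zero_le _

lemma getD_pos {l : List ℕ} (hp : ∀ x ∈ l, 0 < x) {j : ℕ} (h : j < l.length) :
    0 < l.getD j 0 := by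
  rw [List.getD_eq_getElem _ _ h]
  exact hp _ (l.getElem_mem h)

lemma lt_length_of_getD_pos {l : List ℕ} {j : ℕ} (h : 0 < l.getD j 0) : j < l.length := by
  by_contra hc
  rw [List.getD_eq_default _ _ (le_of_not_gt hc)] at h
  exact absurd h (lt_irrefl 0)

/-- counting parts ≥ c -/
def cnt (l : List ℕ) (c : ℕ) : ℕ := l.countP (fun x => decide (c ≤ x))

lemma cnt_iff {l : List ℕ} (hs : l.Pairwise (· ≥ ·)) {j c : ℕ} (hc : 0 < c) :
    j < cnt l c ↔ c ≤ l.getD j 0 := by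
  constructor
  · intro h
    by_contra hcon
    push_neg at hcon
    have hle : cnt l c ≤ j := by
      have hsplit : cnt l c = cnt (l.take j) c + cnt (l.drop j) c := by
        unfold cnt
        rw [← List.countP_append]
        rw [List.take_append_drop]
      have h1 : cnt (l.take j) c ≤ j := by
        calc cnt (l.take j) c ≤ (l.take j).length := List.countP_le_length
        _ ≤ j := by simp [List.length_take]
      have h2 : cnt (l.drop j) c = 0 := by
        apply List.countP_eq_zero.mpr
        intro a ha
        simp only [decide_eq_true_eq]
        obtain ⟨i, hi, rfl⟩ := List.mem_iff_getElem.mp ha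
        rw [List.getElem_drop]
        intro hca
        have : l.getD (j + i) 0 ≤ l.getD j 0 := getD_anti hs (Nat.le_add_right _ _)
        rw [List.getD_eq_getElem _ _ (by
          have := hi; simp [List.length_drop] at this; omega)] at this
        omega
      omega
    omega
  · intro h
    have hjl : j < l.length := lt_length_of_getD_pos (lt_of_lt_of_le hc h)
    have hsplit : cnt l c = cnt (l.take (j+1)) c + cnt (l.drop (j+1)) c := by
      unfold cnt; rw [← List.countP_append, List.take_append_drop]
    have h1 : cnt (l.take (j+1)) c = (l.take (j+1)).length := by
      apply List.countP_eq_length.mpr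
      intro a ha
      simp only [decide_eq_true_eq]
      obtain ⟨i, hi, rfl⟩ := List.mem_iff_getElem.mp ha
      rw [List.getElem_take]
      have hij : i ≤ j := by simp [List.length_take] at hi; omega
      have : l.getD j 0 ≤ l.getD i 0 := getD_anti hs hij
      rw [List.getD_eq_getElem _ _ (by omega : i < l.length)] at this
      omega
    have h2 : (l.take (j+1)).length = j + 1 := by simp [List.length_take]; omega
    omega

/-- extensionality for positive-entry lists via getD -/
lemma ext_getD {l l' : List ℕ} (hp : ∀ x ∈ l, 0 < x) (hp' : ∀ x ∈ l', 0 < x)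
    (h : ∀ j, l.getD j 0 = l'.getD j 0) : l = l' := by
  have hlen : l.length = l'.length := by
    by_contra hc
    rcases Nat.lt_or_ge l.length l'.length with hlt | hge
    · have := getD_pos hp' hlt
      rw [← h] at this
      exact absurd (lt_length_of_getD_pos this) (lt_irrefl _)
    · have hlt : l'.length < l.length := lt_of_le_of_ne hge (fun e => hc e.symm)
      have := getD_pos hp hlt
      rw [h] at this
      exact absurd (lt_length_of_getD_pos this) (lt_irrefl _)
  apply List.ext_getElem hlen
  intro i h1 h2
  have := h i
  rwa [List.getD_eq_getElem _ _ h1, List.getD_eq_getElem _ _ h2] at this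

/-- a partition is determined by its cnt function -/
lemma ext_cnt {l l' : List ℕ} (hs : l.Pairwise (· ≥ ·)) (hp : ∀ x ∈ l, 0 < x)
    (hs' : l'.Pairwise (· ≥ ·)) (hp' : ∀ x ∈ l', 0 < x)
    (h : ∀ c, 0 < c → cnt l c = cnt l' c) : l = l' := by
  apply ext_getD hp hp'
  intro j
  apply le_antisymm
  · rcases Nat.eq_zero_or_pos (l.getD j 0) with h0 | h0
    · omega
    · have : j < cnt l (l.getD j 0) := (cnt_iff hs h0).mpr (le_refl _)
      rw [h _ h0] at this
      exact (cnt_iff hs' h0).mp this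
  · rcases Nat.eq_zero_or_pos (l'.getD j 0) with h0 | h0
    · omega
    · have : j < cnt l' (l'.getD j 0) := (cnt_iff hs' h0).mpr (le_refl _)
      rw [← h _ h0] at this
      exact (cnt_iff hs h0).mp this

/-- conjugate partition -/
def conj (l : List ℕ) : List ℕ :=
  (List.range l.headI).map (fun j => cnt l (j + 1))

lemma headI_max {l : List ℕ} (hs : l.Pairwise (· ≥ ·)) {x : ℕ} (hx : x ∈ l) : x ≤ l.headI := by
  cases l with
  | nil => simp at hx
  | cons h t =>
    rcases List.mem_cons.mp hx with rfl | hxt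
    · simp
    · exact (List.pairwise_cons.mp hs).1 x hxt

lemma length_conj (l : List ℕ) : (conj l).length = l.headI := by simp [conj]

lemma getD_conj {l : List ℕ} (hs : l.Pairwise (· ≥ ·)) (j : ℕ) :
    (conj l).getD j 0 = cnt l (j + 1) := by
  rcases Nat.lt_or_ge j l.headI with hj | hj
  · rw [List.getD_eq_getElem _ _ (by rw [length_conj]; exact hj)]
    simp [conj]
  · rw [List.getD_eq_default _ _ (by rw [length_conj]; exact hj)]
    symm
    apply List.countP_eq_zero.mpr
    intro a ha
    simp only [decide_eq_true_eq]
    have := headI_max hs ha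
    omega

lemma conj_sorted {l : List ℕ} : (conj l).Pairwise (· ≥ ·) := by
  unfold conj
  rw [List.pairwise_map]
  apply List.Pairwise.imp_of_mem (R := (· < ·)) _ (List.pairwise_lt_range (n := _))
  intro a b _ _ hab
  apply List.countP_mono_left
  intro x _ hx
  simp only [decide_eq_true_eq] at *
  omega

lemma conj_pos {l : List ℕ} (hs : l.Pairwise (· ≥ ·)) (hp : ∀ x ∈ l, 0 < x) :
    ∀ x ∈ conj l, 0 < x := by
  intro x hx
  unfold conj at hx
  rw [List.mem_map] at hx
  obtain ⟨j, hj, rfl⟩ := hx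
  rw [List.mem_range] at hj
  have h0 : 0 < l.headI := by
    have hne : l ≠ [] := by intro e; rw [e] at hj; simp at hj
    cases l with
    | nil => exact absurd rfl hne
    | cons h t => exact hp _ (List.mem_cons_self)
  have : (0:ℕ) < cnt l (j+1) := by
    rw [cnt_iff hs (by omega)]
    have : l.getD 0 0 = l.headI := by
      cases l with
      | nil => simp at hj
      | cons h t => simp
    omega
  exact this

lemma ind_sum {a H : ℕ} (h : a ≤ H) :
    ((List.range H).map (fun j => if (decide ((j:ℕ) + 1 ≤ a)) = true then 1 else 0)).sum = a := by
  induction H with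
  | zero => simp; omega
  | succ k ihk =>
    rw [List.range_succ, List.map_append, List.sum_append]
    simp only [List.map_cons, List.map_nil, List.sum_cons, List.sum_nil]
    rcases Nat.lt_or_ge k a with hk | hk
    · have h1 : (decide ((k:ℕ) + 1 ≤ a)) = true := by simp; omega
      rw [h1]
      have ha : a = k + 1 := by omega
      subst ha
      have hk' : ((List.range k).map (fun j => if (decide ((j:ℕ) + 1 ≤ k + 1)) = true then 1 else 0)).sum = k := by
        have : ∀ j ∈ List.range k, (if (decide ((j:ℕ) + 1 ≤ k + 1)) = true then (1:ℕ) else 0) = 1 := by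
          intro j hj
          rw [List.mem_range] at hj
          simp; omega
        rw [List.map_congr_left this]
        simp
      rw [hk']
      simp
    · have h1 : (decide ((k:ℕ) + 1 ≤ a)) = false := by simp; omega
      rw [h1]
      simp only [Bool.false_eq_true, if_false]
      rw [ihk hk]
      simp

lemma sum_conj {l : List ℕ} (hs : l.Pairwise (· ≥ ·)) : (conj l).sum = l.sum := by
  have key : ∀ (H : ℕ) (m : List ℕ), (∀ x ∈ m, x ≤ H) →
      ((List.range H).map (fun j => m.countP (fun x => decide (j + 1 ≤ x)))).sum = m.sum := by
    intro H m
    induction m with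
    | nil => intro _; simp
    | cons a t ih =>
      intro hbd
      have ht := ih (fun x hx => hbd x (List.mem_cons_of_mem _ hx))
      simp only [List.countP_cons]
      have : ((List.range H).map
          (fun j => t.countP (fun x => decide (j + 1 ≤ x)) + if (decide ((j:ℕ) + 1 ≤ a)) = true then 1 else 0)).sum
          = ((List.range H).map (fun j => t.countP (fun x => decide (j + 1 ≤ x)))).sum
            + ((List.range H).map (fun j => if (decide ((j:ℕ) + 1 ≤ a)) = true then 1 else 0)).sum := by
        rw [← List.sum_map_add]
      have ha : ((List.range H).map (fun j => if (decide ((j:ℕ) + 1 ≤ a)) = true then 1 else 0)).sum = a :=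
        ind_sum (hbd a (List.mem_cons_self))
      rw [this, ht, ha]
      simp [Nat.add_comm]
  exact key l.headI l (fun x hx => headI_max hs hx)

/-- fixed point in terms of getD -/
lemma hasFP_iff {l : List ℕ} : HasKFixedPoint 0 l ↔ ∃ j : ℕ, l.getD j 0 = j + 1 := by
  constructor
  · rintro ⟨i, hi⟩
    refine ⟨i.val, ?_⟩
    rw [List.getD_eq_getElem _ _ i.isLt]
    have : (l.get i : ℤ) = (i.val : ℤ) + 1 := by rw [hi]; ring
    have h2 : l.get i = i.val + 1 := by exact_mod_cast this
    simpa [List.get_eq_getElem] using h2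
  · rintro ⟨j, hj⟩
    have hjl : j < l.length := lt_length_of_getD_pos (by omega)
    refine ⟨⟨j, hjl⟩, ?_⟩
    rw [List.getD_eq_getElem _ _ hjl] at hj
    simp only [List.get_eq_getElem]
    push_cast [hj]
    ring

/-- sortedness from adjacent getD comparisons -/
lemma sorted_of_adj {m : List ℕ} (h : ∀ j, j + 1 < m.length → m.getD (j+1) 0 ≤ m.getD j 0) :
    m.Pairwise (· ≥ ·) := by
  rw [← List.isChain_iff_pairwise]
  rw [List.isChain_iff_getElem]
  intro i hi
  have hi' : i + 1 < m.length := by omega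
  have := h i hi' 
  rw [List.getD_eq_getElem _ _ hi', List.getD_eq_getElem _ _ (by omega)] at this
  simpa [List.get_eq_getElem] using this

noncomputable def fpIdx (l : List ℕ) : ℕ := sInf {j | l.getD j 0 = j + 1}

lemma fpIdx_spec {l : List ℕ} (h : ∃ j : ℕ, l.getD j 0 = j + 1) :
    l.getD (fpIdx l) 0 = fpIdx l + 1 :=
  Nat.sInf_mem h

/-- unique j with getD j = j (positive j) for partitions -/
lemma uniq_self {m : List ℕ} (hs : m.Pairwise (· ≥ ·)) {j k : ℕ}
    (hj : m.getD j 0 = j) (hk : m.getD k 0 = k) (hj0 : 0 < j) (hk0 : 0 < k) : j = k := by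
  rcases lt_trichotomy j k with h | h | h
  · have := getD_anti hs (le_of_lt h); omega
  · exact h
  · have := getD_anti hs (le_of_lt h); omega

section CaseA
variable {l : List ℕ} (hs : l.Pairwise (· ≥ ·)) (hp : ∀ x ∈ l, 0 < x)
variable {i : ℕ} (hfp : l.getD i 0 = i + 1) (hA : l.getD (i + 1) 0 = i + 1)

include hs hfp hA in
lemma caseA_cnt_lb {j : ℕ} (hj : j ≤ i) : i + 2 ≤ cnt l (j + 1) := by
  have : i + 1 < cnt l (j + 1) := (cnt_iff hs (by omega)).mpr (by omega)
  omega

include hs hfp in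
lemma caseA_cnt_ub {j : ℕ} (hj : i + 1 ≤ j) : cnt l (j + 1) ≤ i := by
  by_contra hc
  push_neg at hc
  have := (cnt_iff hs (c := j + 1) (by omega)).mp hc
  omega

include hs hfp hA in
lemma caseA_conj_ne (j : ℕ) : (conj l).getD j 0 ≠ j + 1 ∧ (conj l).getD j 0 ≠ j := by
  rw [getD_conj hs]
  rcases le_or_gt j i with hj | hj
  · have := caseA_cnt_lb hs hfp hA hj
    omega
  · have := caseA_cnt_ub hs hfp (by omega : i + 1 ≤ j)
    omega

end CaseA

section CaseB
variable {l : List ℕ} (hs : l.Pairwise (· ≥ ·)) (hp : ∀ x ∈ l, 0 < x)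
variable {i : ℕ} (hfp : l.getD i 0 = i + 1) (hB : l.getD (i + 1) 0 ≤ i) (hi1 : 1 ≤ i)

def mB (l : List ℕ) (i : ℕ) : List ℕ := l.take i ++ i :: (l.drop (i + 1) ++ [1])

include hfp in
lemma caseB_lt : i < l.length := lt_length_of_getD_pos (by omega)

include hfp in
lemma mB_length : (mB l i).length = l.length + 1 := by
  have hiL := caseB_lt hfp
  simp [mB, List.length_take, List.length_drop]
  omega

include hfp in
lemma mB_getD_lt {j : ℕ} (hj : j < i) : (mB l i).getD j 0 = l.getD j 0 := by
  have hiL := caseB_lt hfp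
  unfold mB
  rw [List.getD_append _ _ _ _ (by rw [List.length_take]; omega)]
  rw [List.getD_eq_getElem _ _ (by rw [List.length_take]; omega),
      List.getD_eq_getElem _ _ (by omega : j < l.length)]
  exact List.getElem_take

include hfp in
lemma mB_getD_eq : (mB l i).getD i 0 = i := by
  have hiL := caseB_lt hfp
  unfold mB
  rw [List.getD_append_right _ _ _ _ (by simp [List.length_take])]
  have h0 : i - (l.take i).length = 0 := by rw [List.length_take]; omega
  rw [h0, List.getD_cons_zero]

include hfp in
lemma mB_getD_mid {j : ℕ} (hj1 : i < j) (hj2 : j < l.length) :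
    (mB l i).getD j 0 = l.getD j 0 := by
  have hiL := caseB_lt hfp
  unfold mB
  rw [List.getD_append_right _ _ _ _ (by rw [List.length_take]; omega)]
  have h1 : j - (l.take i).length = (j - i - 1) + 1 := by rw [List.length_take]; omega
  rw [h1, List.getD_cons_succ]
  rw [List.getD_append _ _ _ _ (by rw [List.length_drop]; omega)]
  rw [List.getD_eq_getElem _ _ (by rw [List.length_drop]; omega),
      List.getD_eq_getElem _ _ hj2]
  rw [List.getElem_drop]
  congr 1
  omega

include hfp in
lemma mB_getD_last : (mB l i).getD l.length 0 = 1 := by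
  have hiL := caseB_lt hfp
  unfold mB
  rw [List.getD_append_right _ _ _ _ (by rw [List.length_take]; omega)]
  have h1 : l.length - (l.take i).length = (l.length - i - 1) + 1 := by
    rw [List.length_take]; omega
  rw [h1, List.getD_cons_succ]
  rw [List.getD_append_right _ _ _ _ (by rw [List.length_drop]; omega)]
  have h2 : l.length - i - 1 - (l.drop (i+1)).length = 0 := by
    rw [List.length_drop]; omega
  rw [h2]
  rfl

include hfp in
lemma mB_getD_big {j : ℕ} (hj : l.length < j) : (mB l i).getD j 0 = 0 := by
  apply List.getD_eq_default
  rw [mB_length hfp]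
  omega

end CaseB

section CaseB
variable {l : List ℕ} (hs : l.Pairwise (· ≥ ·)) (hp : ∀ x ∈ l, 0 < x)
variable {i : ℕ} (hfp : l.getD i 0 = i + 1) (hB : l.getD (i + 1) 0 ≤ i) (hi1 : 1 ≤ i)

include hs hp hfp hB hi1 in
lemma mB_sorted : (mB l i).Pairwise (· ≥ ·) := by
  have hiL := caseB_lt hfp
  apply sorted_of_adj
  intro j hj
  rw [mB_length hfp] at hj
  rcases lt_trichotomy (j + 1) i with h1 | h1 | h1
  · rw [mB_getD_lt hfp h1, mB_getD_lt hfp (by omega)]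
    exact getD_anti hs (by omega)
  · rw [h1, mB_getD_eq hfp, mB_getD_lt hfp (by omega)]
    have := getD_anti hs (show j ≤ i by omega)
    omega
  · rcases lt_trichotomy j i with h2 | h2 | h2
    · omega
    · -- j = i
      subst h2
      rw [mB_getD_eq hfp]
      rcases lt_or_eq_of_le (show j + 1 ≤ l.length by omega) with h3 | h3
      · rw [mB_getD_mid hfp (by omega) h3]
        exact hB
      · rw [h3, mB_getD_last hfp]
        omega
    · -- i < j
      rcases lt_or_eq_of_le (show j + 1 ≤ l.length by omega) with h3 | h3
      · rw [mB_getD_mid hfp (by omega) h3, mB_getD_mid hfp h2 (by omega)]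
        exact getD_anti hs (by omega)
      · rw [h3, mB_getD_last hfp, mB_getD_mid hfp h2 (by omega)]
        exact getD_pos hp (by omega)

include hp hi1 in
lemma mB_pos : ∀ x ∈ mB l i, 0 < x := by
  intro x hx
  unfold mB at hx
  rcases List.mem_append.mp hx with h | h
  · exact hp _ (List.take_subset _ _ h)
  · rcases List.mem_cons.mp h with rfl | h
    · omega
    · rcases List.mem_append.mp h with h | h
      · exact hp _ (List.drop_subset _ _ h)
      · simp at h; omega

include hfp in
lemma mB_sum : (mB l i).sum = l.sum := by
  have hiL := caseB_lt hfp
  have hsplit : l.sum = (l.take (i+1)).sum + (l.drop (i+1)).sum := by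
    rw [← List.sum_append, List.take_append_drop]
  have htake : (l.take (i+1)).sum = (l.take i).sum + (i + 1) := by
    rw [← List.take_concat_get hiL, List.concat_eq_append, List.sum_append]
    have : l[i] = i + 1 := by rw [← List.getD_eq_getElem _ 0 hiL]; exact hfp
    simp [this]
  simp only [mB, List.sum_append, List.sum_cons]
  simp [hsplit, htake]
  omega

include hs hfp hB in
lemma mB_noFP : ∀ j, (mB l i).getD j 0 ≠ j + 1 := by
  intro j
  have hiL := caseB_lt hfp
  rcases lt_trichotomy j i with h1 | h1 | h1
  · rw [mB_getD_lt hfp h1]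
    have := getD_anti hs (le_of_lt h1)
    omega
  · subst h1; rw [mB_getD_eq hfp]; omega
  · rcases lt_trichotomy j l.length with h2 | h2 | h2
    · rw [mB_getD_mid hfp h1 h2]
      have := getD_anti hs (show i + 1 ≤ j by omega)
      omega
    · subst h2; rw [mB_getD_last hfp]; omega
    · rw [mB_getD_big hfp h2]; omega

include hfp in
lemma mB_recover :
    l = (mB l i).take i ++ (i + 1) :: ((mB l i).drop (i + 1)).dropLast := by
  have hiL := caseB_lt hfp
  have hlen : (l.take i).length = i := by rw [List.length_take]; omega
  have htake : (mB l i).take i = l.take i := by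
    unfold mB
    exact List.take_left' hlen
  have hdrop : (mB l i).drop (i + 1) = l.drop (i + 1) ++ [1] := by
    unfold mB
    have : i + 1 = (l.take i).length + 1 := by omega
    rw [this, List.drop_append]
    simp
  rw [htake, hdrop, List.dropLast_concat]
  have : l[i] = i + 1 := by rw [← List.getD_eq_getElem _ 0 hiL]; exact hfp
  conv_lhs => rw [← List.take_append_drop (i+1) l, ← List.take_concat_get hiL,
    List.concat_eq_append, this]
  simp

end CaseB

lemma caseB_one_le {n : ℕ} (hn : 2 < n) {l : List ℕ} (hs : l.Pairwise (· ≥ ·))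
    (hp : ∀ x ∈ l, 0 < x) (hsum : l.sum = n)
    (hfp : l.getD (fpIdx l) 0 = fpIdx l + 1)
    (hB : ¬ l.getD (fpIdx l + 1) 0 = fpIdx l + 1) : 1 ≤ fpIdx l := by
  by_contra hc
  push_neg at hc
  interval_cases h : fpIdx l
  · -- all entries equal 1
    have hall : ∀ x ∈ l, x = 1 := by
      intro x hx
      obtain ⟨p, hpl, rfl⟩ := List.mem_iff_getElem.mp hx
      have h1 : l.getD p 0 ≤ l.getD 0 0 := getD_anti hs (Nat.zero_le _)
      rw [List.getD_eq_getElem _ _ hpl] at h1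
      have h2 := hp _ (List.getElem_mem hpl)
      omega
    have hrep : l = List.replicate l.length 1 := List.eq_replicate_of_mem hall
    have hsum2 : l.sum = l.length := by rw [hrep]; simp
    have hlen : 2 < l.length := by omega
    have : l.getD 1 0 = 1 := by
      rw [List.getD_eq_getElem _ _ (by omega : 1 < l.length)]
      exact hall _ (List.getElem_mem (by omega))
    exact hB this

noncomputable def phi (l : List ℕ) : List ℕ :=
  if l.getD (fpIdx l + 1) 0 = fpIdx l + 1 then conj l else mB l (fpIdx l)

-- ### finiteness
lemma finite_partitions (n : ℕ) : {l : List ℕ | IsPartitionOf n l}.Finite := by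
  rw [← Set.finite_coe_iff]
  haveI : IsAntisymm ℕ (· ≥ ·) := ⟨fun a b h1 h2 => le_antisymm h2 h1⟩
  apply Finite.of_injective (β := n.Partition)
    (f := fun x => ⟨(x.1 : Multiset ℕ),
      fun {i} hi => x.2.2.1 i (by simpa using hi), by simpa using x.2.2.2⟩)
  intro a b hab
  have h1 : (a.1 : Multiset ℕ) = (b.1 : Multiset ℕ) := congrArg Nat.Partition.parts hab
  have h2 : a.1.Perm b.1 := Multiset.coe_eq_coe.mp h1
  exact Subtype.ext (List.Perm.eq_of_pairwise' a.2.1 b.2.1 h2)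

-- ### caseB hB normalization
lemma caseB_le {l : List ℕ} (hs : l.Pairwise (· ≥ ·)) {i : ℕ}
    (hfp : l.getD i 0 = i + 1)
    (hB : ¬ l.getD (i + 1) 0 = i + 1) : l.getD (i + 1) 0 ≤ i := by
  have := getD_anti hs (show i ≤ i + 1 by omega)
  omega

-- ### phi maps F into G
lemma phi_mem {n : ℕ} (hn : 2 < n) {l : List ℕ}
    (hl : IsPartitionOf n l ∧ HasKFixedPoint 0 l) :
    IsPartitionOf n (phi l) ∧ ¬ HasKFixedPoint 0 (phi l) := by
  obtain ⟨⟨hs, hp, hsum⟩, hfpl⟩ := hl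
  have hex := hasFP_iff.mp hfpl
  have hfp := fpIdx_spec hex
  unfold phi
  split_ifs with hA
  · refine ⟨⟨conj_sorted, conj_pos hs hp, by rw [sum_conj hs]; exact hsum⟩, ?_⟩
    rw [hasFP_iff]
    rintro ⟨j, hj⟩
    exact (caseA_conj_ne hs hfp hA j).1 hj
  · have hB := caseB_le hs hfp hA
    have hi1 := caseB_one_le hn hs hp hsum hfp hA
    refine ⟨⟨mB_sorted hs hp hfp hB hi1, mB_pos hp hi1, by rw [mB_sum hfp]; exact hsum⟩, ?_⟩
    rw [hasFP_iff]
    rintro ⟨j, hj⟩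
    exact mB_noFP hs hfp hB j hj

-- ### injectivity
lemma phi_inj {n : ℕ} (hn : 2 < n) :
    Set.InjOn phi {l : List ℕ | IsPartitionOf n l ∧ HasKFixedPoint 0 l} := by
  rintro l ⟨⟨hs, hp, hsum⟩, hfpl⟩ l' ⟨⟨hs', hp', hsum'⟩, hfpl'⟩ h
  have hex := hasFP_iff.mp hfpl
  have hex' := hasFP_iff.mp hfpl'
  have hfp := fpIdx_spec hex
  have hfp' := fpIdx_spec hex'
  unfold phi at h
  split_ifs at h with hA hA' hA'
  · -- both conjugate
    apply ext_cnt hs hp hs' hp'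
    intro c hc
    obtain ⟨j, rfl⟩ : ∃ j, c = j + 1 := ⟨c - 1, by omega⟩
    rw [← getD_conj hs, ← getD_conj hs', h]
  · -- conj = mB : contradiction
    exfalso
    have hB' := caseB_le hs' hfp' hA'
    have hi1' := caseB_one_le hn hs' hp' hsum' hfp' hA'
    have h1 : (mB l' (fpIdx l')).getD (fpIdx l') 0 = fpIdx l' := mB_getD_eq hfp'
    rw [← h] at h1
    exact (caseA_conj_ne hs hfp hA (fpIdx l')).2 h1
  · -- mB = conj : contradiction
    exfalso
    have hB := caseB_le hs hfp hA
    have hi1 := caseB_one_le hn hs hp hsum hfp hA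
    have h1 : (mB l (fpIdx l)).getD (fpIdx l) 0 = fpIdx l := mB_getD_eq hfp
    rw [h] at h1
    exact (caseA_conj_ne hs' hfp' hA' (fpIdx l)).2 h1
  · -- both mB
    have hB := caseB_le hs hfp hA
    have hB' := caseB_le hs' hfp' hA'
    have hi1 := caseB_one_le hn hs hp hsum hfp hA
    have hi1' := caseB_one_le hn hs' hp' hsum' hfp' hA'
    have hms : (mB l (fpIdx l)).Pairwise (· ≥ ·) := mB_sorted hs hp hfp hB hi1
    have h1 : (mB l (fpIdx l)).getD (fpIdx l) 0 = fpIdx l := mB_getD_eq hfp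
    have h2 : (mB l (fpIdx l)).getD (fpIdx l') 0 = fpIdx l' := by
      rw [h]; exact mB_getD_eq hfp'
    have hii : fpIdx l = fpIdx l' := uniq_self hms h1 h2 hi1 hi1'
    have hrec := mB_recover hfp
    rw [h, hii] at hrec
    rw [hrec, ← mB_recover hfp']

-- ### the witness [n-1, 1]
lemma w_getD {n : ℕ} (hn : 2 < n) (j : ℕ) :
    ([n-1, 1] : List ℕ).getD j 0 = if j = 0 then n - 1 else if j = 1 then 1 else 0 := by
  match j with
  | 0 => rfl
  | 1 => rfl
  | (j+2) => simp [List.getD]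

lemma w_mem {n : ℕ} (hn : 2 < n) :
    IsPartitionOf n [n-1, 1] ∧ ¬ HasKFixedPoint 0 [n-1, 1] := by
  refine ⟨⟨?_, ?_, ?_⟩, ?_⟩
  · simp [List.pairwise_cons]
    omega
  · intro x hx
    simp at hx
    rcases hx with rfl | rfl <;> omega
  · simp; omega
  · rw [hasFP_iff]
    rintro ⟨j, hj⟩
    rw [w_getD hn] at hj
    split_ifs at hj <;> omega

lemma w_not_image {n : ℕ} (hn : 2 < n) :
    [n-1, 1] ∉ phi '' {l : List ℕ | IsPartitionOf n l ∧ HasKFixedPoint 0 l} := by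
  rintro ⟨l, ⟨⟨hs, hp, hsum⟩, hfpl⟩, h⟩
  have hex := hasFP_iff.mp hfpl
  have hfp := fpIdx_spec hex
  unfold phi at h
  split_ifs at h with hA
  · have h1 : (conj l).getD 1 0 ≠ 1 := (caseA_conj_ne hs hfp hA 1).2
    rw [h, w_getD hn] at h1
    simp at h1
  · have hB := caseB_le hs hfp hA
    have hi1 := caseB_one_le hn hs hp hsum hfp hA
    have hlen : (mB l (fpIdx l)).length = l.length + 1 := mB_length hfp
    rw [h] at hlen
    simp at hlen
    -- l.length = 1, but fpIdx l < l.length and 1 ≤ fpIdx l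
    have := caseB_lt hfp
    omega

end AuxStmt5

open AuxStmt5 in
theorem stmt5 (n : ℕ) (hn : 2 < n) : fk 0 n < gk 0 n := by
  have hGfin : {l : List ℕ | IsPartitionOf n l ∧ ¬ HasKFixedPoint 0 l}.Finite :=
    (finite_partitions n).subset (fun l hl => hl.1)
  have hss : phi '' {l : List ℕ | IsPartitionOf n l ∧ HasKFixedPoint 0 l} ⊂
      {l : List ℕ | IsPartitionOf n l ∧ ¬ HasKFixedPoint 0 l} := by
    constructor
    · rintro m ⟨l, hl, rfl⟩
      exact phi_mem hn hl
    · intro hcon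
      exact w_not_image hn (hcon (w_mem hn))
  have h1 : {l : List ℕ | IsPartitionOf n l ∧ HasKFixedPoint 0 l}.ncard
      = (phi '' {l : List ℕ | IsPartitionOf n l ∧ HasKFixedPoint 0 l}).ncard :=
    (Set.ncard_image_of_injOn (phi_inj hn)).symm
  rw [fk, gk, h1]
  exact Set.ncard_lt_ncard hss hGfin
end

section
/- For every integer k ≥ 0 and every integer n ≥ 2, the number g_k(n) of partitions of n without a k-fixed point equals Σ_{m≥−k} M(m,n), the number of partitions of n with crank at least −k. -/
open List in
lemma hs_sorted_ge {l : List ℕ} (hs : l.Pairwise (· ≥ ·)) {i j : ℕ} (hij : i ≤ j)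
    (hj : j < l.length) : l[j] ≤ l[i]'(lt_of_le_of_lt hij hj) := by
  rcases eq_or_lt_of_le hij with rfl | h
  · exact le_refl _
  · exact List.pairwise_iff_getElem.mp hs i j _ hj h

open List in
lemma hs_countP_iff (p : ℕ → Bool) (hp : ∀ x y : ℕ, x ≤ y → p x = true → p y = true)
    {l : List ℕ} (hs : l.Pairwise (· ≥ ·)) {j : ℕ} (hj : j < l.length) :
    p l[j] = true ↔ j < l.countP p := by
  constructor
  · intro hpj
    have h1 : (l.take (j+1)).countP p = j + 1 := by
      rw [List.countP_eq_length.mpr, List.length_take]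
      · omega
      · intro a ha
        obtain ⟨t, ht, rfl⟩ := List.mem_iff_getElem.mp ha
        rw [List.getElem_take]
        have ht' : t ≤ j := by simp [List.length_take] at ht; omega
        exact hp _ _ (hs_sorted_ge hs ht' hj) hpj
    have h2 := (l.take_sublist (j+1)).countP_le (p := p)
    omega
  · intro hcnt
    by_contra hpj
    have hdrop : (l.drop j).countP p = 0 := by
      rw [List.countP_eq_zero]
      intro a ha
      obtain ⟨t, ht, rfl⟩ := List.mem_iff_getElem.mp ha
      rw [List.getElem_drop]
      intro hpa
      exact hpj (hp _ _ (hs_sorted_ge hs (Nat.le_add_right j t) (by simp at ht; omega)) hpa)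
    have : l.countP p = (l.take j).countP p + (l.drop j).countP p := by
      rw [← List.countP_append, List.take_append_drop]
    have h2 : (l.take j).countP p ≤ j := le_trans (List.countP_le_length) (by simp)
    omega

-- characterization of l[j] = m by counts
lemma hs_get_eq_iff {l : List ℕ} (hs : l.Pairwise (· ≥ ·)) {j m : ℕ} (hj : j < l.length) :
    l[j] = m ↔ l.countP (fun x => decide (m < x)) ≤ j ∧ j < l.countP (fun x => decide (m ≤ x)) := by
  have h1 := hs_countP_iff (fun x => decide (m < x))
    (by intro x y hxy hx; simp only [decide_eq_true_eq] at *; omega) hs hj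
  have h2 := hs_countP_iff (fun x => decide (m ≤ x))
    (by intro x y hxy hx; simp only [decide_eq_true_eq] at *; omega) hs hj
  simp only [decide_eq_true_eq] at h1 h2
  constructor
  · rintro rfl
    exact ⟨by omega, h2.mp (le_refl _)⟩
  · rintro ⟨ha, hb⟩
    have := h2.mpr hb
    have : ¬ (m < l[j]) := fun h => by omega
    omega

lemma hs_get_of_counts {l : List ℕ} (hs : l.Pairwise (· ≥ ·)) {j m : ℕ}
    (h1 : l.countP (fun x => decide (m < x)) ≤ j) (h2 : j < l.countP (fun x => decide (m ≤ x))) :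
    ∃ hj : j < l.length, l[j] = m := by
  have hj : j < l.length := lt_of_lt_of_le h2 (List.countP_le_length)
  exact ⟨hj, (hs_get_eq_iff hs hj).mpr ⟨h1, h2⟩⟩

-- fixed point in ℕ terms
lemma hasK_iff (k : ℕ) (l : List ℕ) :
    HasKFixedPoint (k : ℤ) l ↔ ∃ j, ∃ h : j < l.length, l[j] = j + 1 + k := by
  constructor
  · rintro ⟨i, hi⟩
    refine ⟨i.val, i.isLt, ?_⟩
    rw [List.get_eq_getElem] at hi
    exact_mod_cast hi
  · rintro ⟨j, hj, hje⟩
    exact ⟨⟨j, hj⟩, by rw [List.get_eq_getElem]; exact_mod_cast congrArg (Nat.cast : ℕ → ℤ) hje⟩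

-- uniqueness of the fixed point
lemma fix_unique {l : List ℕ} (hs : l.Pairwise (· ≥ ·)) {k i1 i2 : ℕ}
    (h1 : i1 < l.length) (h2 : i2 < l.length)
    (he1 : l[i1] = i1 + 1 + k) (he2 : l[i2] = i2 + 1 + k) : i1 = i2 := by
  rcases le_total i1 i2 with h | h
  · have := hs_sorted_ge hs h h2; omega
  · have := hs_sorted_ge hs h h1; omega

noncomputable def fixIdx (k : ℕ) (l : List ℕ) : ℕ := sInf {j | l.getD j 0 = j + 1 + k}

noncomputable def phiHS (k : ℕ) (l : List ℕ) : List ℕ :=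
  l.eraseIdx (fixIdx k l) ++ List.replicate (fixIdx k l + 1 + k) 1

lemma fixIdx_spec {k : ℕ} {l : List ℕ} (h : HasKFixedPoint (k : ℤ) l) :
    ∃ hlen : fixIdx k l < l.length, l[fixIdx k l] = fixIdx k l + 1 + k := by
  obtain ⟨j, hj, hje⟩ := (hasK_iff k l).mp h
  have hne : {j | l.getD j 0 = j + 1 + k}.Nonempty :=
    ⟨j, by simp only [Set.mem_setOf_eq, List.getD_eq_getElem l 0 hj]; exact hje⟩
  have hmem := Nat.sInf_mem hne
  simp only [Set.mem_setOf_eq] at hmem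
  rw [show sInf {j | l.getD j 0 = j + 1 + k} = fixIdx k l from rfl] at hmem
  have hlt : fixIdx k l < l.length := by
    by_contra hge
    rw [List.getD_eq_default l 0 (by omega)] at hmem
    omega
  exact ⟨hlt, by rwa [List.getD_eq_getElem l 0 hlt] at hmem⟩

-- crank inequality in ℕ terms
lemma crank_lt_iff (k : ℕ) (l : List ℕ) :
    crank l < -(k : ℤ) ↔
      l.countP (fun x => decide (l.count 1 < x)) + k + 1 ≤ l.count 1 := by
  unfold crank
  split
  · rename_i h
    constructor
    · intro hlt
      exfalso
      have : (0 : ℤ) ≤ (l.headI : ℤ) := Int.natCast_nonneg _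
      omega
    · intro hle; omega
  · rename_i h
    rw [← List.countP_eq_length_filter]
    constructor
    · intro hlt
      have : (l.countP (fun x => decide (l.count 1 < x)) : ℤ) < (l.count 1 : ℤ) - k := by omega
      exact_mod_cast by omega
    · intro hle
      have h1 : (l.countP (fun x => decide (l.count 1 < x)) + k + 1 : ℤ) ≤ (l.count 1 : ℤ) := by
        exact_mod_cast hle
      omega

-- countP of "greater than v" on phi-shaped list
lemma countP_gt_phi {k i : ℕ} {l : List ℕ} (hs : l.Pairwise (· ≥ ·)) (hi : i < l.length)
    (hm : l[i] = i + 1 + k) (v : ℕ) (hv : i + 1 + k ≤ v) :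
    (l.eraseIdx i ++ List.replicate (i + 1 + k) 1).countP (fun x => decide (v < x)) ≤ i := by
  rw [List.countP_append, List.eraseIdx_eq_take_drop_succ, List.countP_append]
  have hrep : (List.replicate (i + 1 + k) 1).countP (fun x => decide (v < x)) = 0 := by
    rw [List.countP_eq_zero]
    intro a ha
    rw [List.eq_of_mem_replicate ha]
    simp only [decide_eq_true_eq]; omega
  have hdrop : (l.drop (i+1)).countP (fun x => decide (v < x)) = 0 := by
    rw [List.countP_eq_zero]
    intro a ha
    obtain ⟨t, ht, rfl⟩ := List.mem_iff_getElem.mp ha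
    rw [List.getElem_drop]
    have hlt : i + 1 + t < l.length := by simp at ht; omega
    have := hs_sorted_ge hs (show i ≤ i+1+t by omega) hlt
    simp only [decide_eq_true_eq]; omega
  have htake : (l.take i).countP (fun x => decide (v < x)) ≤ i :=
    le_trans (List.countP_le_length) (by simp)
  omega

lemma countP_ge_phi {k i : ℕ} {l : List ℕ} (hs : l.Pairwise (· ≥ ·)) (hi : i < l.length)
    (hm : l[i] = i + 1 + k) :
    i ≤ (l.eraseIdx i ++ List.replicate (i + 1 + k) 1).countP (fun x => decide (i + 1 + k ≤ x)) := by
  rw [List.countP_append, List.eraseIdx_eq_take_drop_succ, List.countP_append]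
  have htake : (l.take i).countP (fun x => decide (i + 1 + k ≤ x)) = i := by
    rw [List.countP_eq_length.mpr, List.length_take]
    · omega
    · intro a ha
      obtain ⟨t, ht, rfl⟩ := List.mem_iff_getElem.mp ha
      rw [List.getElem_take]
      have ht' : t ≤ i := by simp [List.length_take] at ht; omega
      have := hs_sorted_ge hs ht' hi
      simp only [decide_eq_true_eq]; omega
  omega

lemma perm_phi {i : ℕ} {l : List ℕ} (hi : i < l.length) :
    l.Perm (l[i] :: l.eraseIdx i) :=
  (List.perm_cons_erase (l.getElem_mem hi)).trans ((List.erase_getElem hi).cons _)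

lemma sorted_phi {i m : ℕ} {l : List ℕ} (hs : l.Pairwise (· ≥ ·)) (hpos : ∀ x ∈ l, 0 < x) :
    (l.eraseIdx i ++ List.replicate m 1).Pairwise (· ≥ ·) := by
  rw [List.pairwise_append]
  refine ⟨List.Pairwise.sublist (List.eraseIdx_sublist l i) hs, List.pairwise_replicate.mpr (by simp), ?_⟩
  intro a ha b hb
  rw [List.eq_of_mem_replicate hb]
  exact hpos a ((List.eraseIdx_sublist l i).subset ha)

-- finiteness of the set of partitions of n
lemma partitions_finite (n : ℕ) : {l : List ℕ | IsPartitionOf n l}.Finite := by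
  haveI : IsAntisymm ℕ (· ≥ ·) := ⟨fun a b h1 h2 => le_antisymm h2 h1⟩
  have hinj : Set.InjOn (fun l : List ℕ => (l : Multiset ℕ)) {l | IsPartitionOf n l} := by
    intro a ha b hb h
    exact List.Perm.eq_of_pairwise' ha.1 hb.1 (Multiset.coe_eq_coe.mp h)
  apply Set.Finite.of_finite_image ?_ hinj
  apply Set.Finite.subset (Set.finite_range (Nat.Partition.parts (n := n)))
  rintro m ⟨l, hl, rfl⟩
  exact ⟨⟨(l : Multiset ℕ), fun hi => hl.2.1 _ (by simpa using hi), by simpa using hl.2.2⟩, rfl⟩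

-- phi is well-defined : maps F into C
lemma phi_mem {k n : ℕ} {l : List ℕ} (hl : IsPartitionOf n l) (hfix : HasKFixedPoint (k : ℤ) l) :
    IsPartitionOf n (phiHS k l) ∧ crank (phiHS k l) < -(k : ℤ) := by
  obtain ⟨hi, hm⟩ := fixIdx_spec hfix
  set i := fixIdx k l with hidef
  obtain ⟨hs, hpos, hsum⟩ := hl
  have hperm := perm_phi hi
  constructor
  · refine ⟨sorted_phi hs hpos, ?_, ?_⟩
    · intro x hx
      rcases List.mem_append.mp hx with h | h
      · exact hpos x ((List.eraseIdx_sublist l i).subset h)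
      · rw [List.eq_of_mem_replicate h]; norm_num
    · have h1 : l.sum = l[i] + (l.eraseIdx i).sum := by
        rw [hperm.sum_eq]; simp
      rw [show l[i]'hi = i + 1 + k from hm] at h1
      rw [phiHS, ← hidef, List.sum_append, List.sum_replicate]
      simp only [smul_eq_mul, mul_one]
      omega
  · rw [crank_lt_iff, phiHS, ← hidef, List.count_append, List.count_replicate_self]
    have := countP_gt_phi hs hi hm ((l.eraseIdx i).count 1 + (i + 1 + k)) (by omega)
    omega

lemma idx_contra {l'' : List ℕ} {k i1 i2 : ℕ}
    (ha1 : l''.countP (fun x => decide (i1 + 1 + k < x)) ≤ i1)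
    (hb2 : i2 ≤ l''.countP (fun x => decide (i2 + 1 + k ≤ x))) (h12 : i1 < i2) : False := by
  have := List.countP_mono_left (l := l'') (p := fun x => decide (i2 + 1 + k ≤ x))
    (q := fun x => decide (i1 + 1 + k < x))
    (by intro x _ hx; simp only [decide_eq_true_eq] at *; omega)
  omega

lemma phi_inj {k n : ℕ} {l1 l2 : List ℕ} (h1 : IsPartitionOf n l1)
    (hf1 : HasKFixedPoint (k : ℤ) l1) (h2 : IsPartitionOf n l2)
    (hf2 : HasKFixedPoint (k : ℤ) l2) (heq : phiHS k l1 = phiHS k l2) : l1 = l2 := by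
  haveI : IsAntisymm ℕ (· ≥ ·) := ⟨fun a b x1 x2 => le_antisymm x2 x1⟩
  obtain ⟨hi1, hm1⟩ := fixIdx_spec hf1
  obtain ⟨hi2, hm2⟩ := fixIdx_spec hf2
  have ha1 := countP_gt_phi h1.1 hi1 hm1 (fixIdx k l1 + 1 + k) (le_refl _)
  have hb1 := countP_ge_phi h1.1 hi1 hm1
  have ha2 := countP_gt_phi h2.1 hi2 hm2 (fixIdx k l2 + 1 + k) (le_refl _)
  have hb2 := countP_ge_phi h2.1 hi2 hm2
  rw [show l1.eraseIdx (fixIdx k l1) ++ List.replicate (fixIdx k l1 + 1 + k) 1 = phiHS k l1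
    from rfl, heq, phiHS] at ha1 hb1
  have hieq : fixIdx k l1 = fixIdx k l2 := by
    rcases lt_trichotomy (fixIdx k l1) (fixIdx k l2) with h | h | h
    · exact absurd (idx_contra ha1 hb2 h) id
    · exact h
    · exact absurd (idx_contra ha2 hb1 h) id
  have hcancel : l1.eraseIdx (fixIdx k l1) = l2.eraseIdx (fixIdx k l2) := by
    rw [← hieq]
    have heq' := heq
    rw [phiHS, phiHS, ← hieq] at heq'
    exact List.append_cancel_right heq'
  have hperm : l1.Perm l2 := by
    refine (perm_phi hi1).trans (.trans ?_ (perm_phi hi2).symm)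
    rw [hm1, hm2, hcancel, hieq]
  exact List.Perm.eq_of_pairwise' h1.1 h2.1 hperm

lemma phi_surj {k n : ℕ} {l' : List ℕ} (hl' : IsPartitionOf n l') (hc : crank l' < -(k : ℤ)) :
    ∃ l : List ℕ, (IsPartitionOf n l ∧ HasKFixedPoint (k : ℤ) l) ∧ phiHS k l = l' := by
  haveI : IsAntisymm ℕ (· ≥ ·) := ⟨fun a b x1 x2 => le_antisymm x2 x1⟩
  obtain ⟨hsort, hpos, hsum⟩ := hl'
  set ω := l'.count 1 with hω
  have hcrk : l'.countP (fun x => decide (ω < x)) + k + 1 ≤ ω := (crank_lt_iff k l').mp hc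
  -- the index
  set S : Set ℕ := {j | l'.countP (fun x => decide (j + 1 + k < x)) ≤ j} with hS
  have hSne : S.Nonempty := ⟨l'.length, le_trans (List.countP_le_length) (le_refl _)⟩
  set i := sInf S with hidef
  have hiS : l'.countP (fun x => decide (i + 1 + k < x)) ≤ i := Nat.sInf_mem hSne
  set m := i + 1 + k with hm
  -- m ≤ ω
  have hmω : m ≤ ω := by
    have hωk : k + 1 ≤ ω := by omega
    have hmem : (ω - k - 1) ∈ S := by
      simp only [hS, Set.mem_setOf_eq, show ω - k - 1 + 1 + k = ω from by omega]
      omega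
    have := Nat.sInf_le hmem
    omega
  -- the three pieces
  set A := l'.filter (fun x => decide (m < x)) with hA
  set Mrest := l'.filter (fun x => !decide (m < x)) with hM
  set B := Mrest.filter (fun x => decide (1 < x)) with hB
  set R := Mrest.filter (fun x => !decide (1 < x)) with hR
  have h1 : (A ++ Mrest).Perm l' := List.filter_append_perm _ l'
  have h2 : (B ++ R).Perm Mrest := List.filter_append_perm _ Mrest
  -- membership facts
  have hmemA : ∀ x ∈ A, x ∈ l' ∧ m < x := by
    intro x hx; rw [hA, List.mem_filter] at hx; simpa using hx
  have hmemB : ∀ x ∈ B, x ∈ l' ∧ 1 < x ∧ x ≤ m := by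
    intro x hx
    rw [hB, List.mem_filter] at hx
    obtain ⟨hx1, hx2⟩ := hx
    rw [hM, List.mem_filter] at hx1
    simp only [decide_eq_true_eq, Bool.not_eq_true', decide_eq_false_iff_not, not_lt] at *
    exact ⟨hx1.1, hx2, hx1.2⟩
  -- R is all ones
  have hRones : ∀ x ∈ R, x = 1 := by
    intro x hx
    rw [hR, List.mem_filter] at hx
    obtain ⟨hx1, hx2⟩ := hx
    rw [hM, List.mem_filter] at hx1
    have := hpos x hx1.1
    simp only [Bool.not_eq_true', decide_eq_false_iff_not, not_lt] at hx2
    omega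
  have hRrep : R = List.replicate ω 1 := by
    have hrep := List.eq_replicate_of_mem hRones
    have hcnt : ω = R.length := by
      have e1 : l'.count 1 = A.count 1 + Mrest.count 1 := by rw [← h1.count_eq, List.count_append]
      have e2 : Mrest.count 1 = B.count 1 + R.count 1 := by rw [← h2.count_eq, List.count_append]
      have e3 : A.count 1 = 0 := by
        rw [List.count_eq_zero]
        intro hmem1
        have := (hmemA 1 hmem1).2
        omega
      have e4 : B.count 1 = 0 := by
        rw [List.count_eq_zero]
        intro hmem1
        have := (hmemB 1 hmem1).2
        omega
      have e5 : R.count 1 = R.length := by rw [hrep]; simp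
      omega
    rw [hcnt]; exact hrep
  have hsplit : l'.Perm (A ++ (B ++ List.replicate ω 1)) := by
    rw [← hRrep]
    exact (h1.symm).trans ((h2.symm.append_left A))
  -- the candidate partition
  set L := A ++ m :: (B ++ List.replicate (ω - m) 1) with hL
  -- the master permutation
  have hchain : (L ++ List.replicate m 1).Perm (m :: l') := by
    have e0 : L ++ List.replicate m 1
        = A ++ m :: (B ++ (List.replicate (ω - m) 1 ++ List.replicate m 1)) := by
      simp [hL, List.append_assoc]
    rw [e0, ← List.replicate_add, show ω - m + m = ω from by omega]
    exact List.perm_middle.trans (hsplit.symm.cons m)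
  -- L is sorted
  have hsortL : L.Pairwise (· ≥ ·) := by
    rw [hL, List.pairwise_append]
    refine ⟨List.Pairwise.sublist List.filter_sublist hsort, ?_, ?_⟩
    · rw [List.pairwise_cons]
      constructor
      · intro b hb
        rcases List.mem_append.mp hb with h | h
        · exact (hmemB b h).2.2
        · rw [List.eq_of_mem_replicate h]; omega
      · rw [List.pairwise_append]
        refine ⟨List.Pairwise.sublist (List.filter_sublist.trans List.filter_sublist)
          hsort, List.pairwise_replicate.mpr (by simp), ?_⟩
        intro a ha b hb
        rw [List.eq_of_mem_replicate hb]
        have := (hmemB a ha).2.1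
        omega
    · intro a ha b hb
      have ha' := (hmemA a ha).2
      rcases List.mem_cons.mp hb with rfl | h
      · omega
      rcases List.mem_append.mp h with h | h
      · have := (hmemB b h).2.2; omega
      · rw [List.eq_of_mem_replicate h]; omega
  -- L is positive
  have hposL : ∀ x ∈ L, 0 < x := by
    intro x hx
    rw [hL] at hx
    rcases List.mem_append.mp hx with h | h
    · exact hpos x (hmemA x h).1
    rcases List.mem_cons.mp h with rfl | h
    · omega
    rcases List.mem_append.mp h with h | h
    · have := (hmemB x h).2.1; omega
    · rw [List.eq_of_mem_replicate h]; omega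
  -- L sums to n
  have hsumL : L.sum = n := by
    have := hchain.sum_eq
    rw [List.sum_append, List.sum_replicate, List.sum_cons, hsum] at this
    simp only [smul_eq_mul, mul_one] at this
    omega
  -- fixed point of L at index i
  have hcnt1 : L.countP (fun x => decide (m < x)) ≤ i := by
    have := hchain.countP_eq (fun x => decide (m < x))
    rw [List.countP_append, List.countP_cons] at this
    have hz : (List.replicate m 1).countP (fun x => decide (m < x)) = 0 := by
      rw [List.countP_eq_zero]
      intro a ha
      rw [List.eq_of_mem_replicate ha]
      simp only [decide_eq_true_eq]; omega
    simp only [decide_eq_true_eq] at this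
    rw [hz] at this
    simp only [lt_irrefl, if_false] at this
    omega
  have hcnt2 : i < L.countP (fun x => decide (m ≤ x)) := by
    rcases Nat.eq_zero_or_pos i with hi0 | hi0
    · rw [hi0]
      rw [List.countP_pos_iff]
      exact ⟨m, by rw [hL]; exact List.mem_append_right _ List.mem_cons_self,
        by simp⟩
    · have hmin : ¬ (i - 1) ∈ S := Nat.notMem_of_lt_sInf (by omega)
      simp only [hS, Set.mem_setOf_eq, not_le, show i - 1 + 1 + k = i + k from by omega] at hmin
      have hcongr : l'.countP (fun x => decide (i + k < x)) = l'.countP (fun x => decide (m ≤ x)) := by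
        apply List.countP_congr
        intro a _
        have hiff : (i + k < a) ↔ (m ≤ a) := by rw [hm]; omega
        simpa using hiff
      have := hchain.countP_eq (fun x => decide (m ≤ x))
      rw [List.countP_append, List.countP_cons] at this
      have hz : (List.replicate m 1).countP (fun x => decide (m ≤ x)) = 0 := by
        rw [List.countP_eq_zero]
        intro a ha
        rw [List.eq_of_mem_replicate ha]
        simp only [decide_eq_true_eq]; omega
      rw [hz] at this
      have hif : (if (decide (m ≤ m) = true) then 1 else 0) = 1 := by simp
      rw [hif] at this
      omega
  obtain ⟨hLi, hgetL⟩ := hs_get_of_counts hsortL hcnt1 hcnt2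
  have hfixL : HasKFixedPoint (k : ℤ) L := (hasK_iff k L).mpr ⟨i, hLi, by rw [hgetL]⟩
  refine ⟨L, ⟨⟨hsortL, hposL, hsumL⟩, hfixL⟩, ?_⟩
  -- phiHS k L = l'
  obtain ⟨hi', hm'⟩ := fixIdx_spec hfixL
  have hidx : fixIdx k L = i := fix_unique hsortL hi' hLi hm' hgetL
  rw [phiHS, hidx]
  apply List.Perm.eq_of_pairwise' (sorted_phi hsortL hposL) hsort ?_
  apply List.Perm.cons_inv (a := m)
  have hLp : L.Perm (m :: L.eraseIdx i) := by
    have := perm_phi hLi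
    rwa [hgetL] at this
  have erfl : m :: (L.eraseIdx i ++ List.replicate m 1)
      = (m :: L.eraseIdx i) ++ List.replicate m 1 := rfl
  rw [erfl]
  exact (hLp.symm.append_right _).trans hchain

theorem stmt8 (k : ℕ) (n : ℕ) (hn : 2 ≤ n) :
    gk (k : ℤ) n = {l : List ℕ | IsPartitionOf n l ∧ -(k : ℤ) ≤ crank l}.ncard := by
  set P := {l : List ℕ | IsPartitionOf n l} with hP
  set F := {l : List ℕ | IsPartitionOf n l ∧ HasKFixedPoint (k : ℤ) l} with hF
  set C := {l : List ℕ | IsPartitionOf n l ∧ crank l < -(k : ℤ)} with hC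
  have hPfin : P.Finite := partitions_finite n
  have hFsub : F ⊆ P := fun l hl => hl.1
  have hCsub : C ⊆ P := fun l hl => hl.1
  have key : F.ncard = C.ncard := by
    have himg : phiHS k '' F = C := by
      ext l'
      constructor
      · rintro ⟨l, ⟨hl, hfix⟩, rfl⟩
        exact phi_mem hl hfix
      · rintro ⟨hl', hc⟩
        obtain ⟨l, hmem, heq⟩ := phi_surj hl' hc
        exact ⟨l, hmem, heq⟩
    have hinj : Set.InjOn (phiHS k) F := fun a ha b hb => phi_inj ha.1 ha.2 hb.1 hb.2
    calc F.ncard = (phiHS k '' F).ncard := (Set.ncard_image_of_injOn hinj).symm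
    _ = C.ncard := by rw [himg]
  have e1 : {l : List ℕ | IsPartitionOf n l ∧ ¬ HasKFixedPoint (k : ℤ) l} = P \ F := by
    ext l
    simp only [hP, hF, Set.mem_setOf_eq, Set.mem_diff]
    tauto
  have e2 : {l : List ℕ | IsPartitionOf n l ∧ -(k : ℤ) ≤ crank l} = P \ C := by
    ext l
    simp only [hP, hC, Set.mem_setOf_eq, Set.mem_diff, not_and, not_lt]
    constructor
    · rintro ⟨h1, h2⟩; exact ⟨h1, fun _ => h2⟩
    · rintro ⟨h1, h2⟩; exact ⟨h1, h2 h1⟩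
  rw [gk, e1, e2, Set.ncard_diff hFsub (hPfin.subset hFsub), Set.ncard_diff hCsub (hPfin.subset hCsub), key]
end

section
/- For every integer k ≥ 0, as formal power series in q, Σ_{n≥0} f_k(n) q^n = Σ_{i≥1} q^{i(i+k)} / ((q;q)_{i+k} (q;q)_{i−1}), where the right-hand side converges coefficientwise (the term for index i has lowest degree i(i+k)). -/
namespace Aux

lemma length_le_sum' {l : List ℕ} (h : ∀ x ∈ l, 0 < x) : l.length ≤ l.sum := by
  induction l with
  | nil => simp
  | cons a t ih =>
    have h1 := h a (by simp)
    have h2 := ih fun x hx => h x (by simp [hx])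
    simp only [List.length_cons, List.sum_cons]; omega

lemma mul_length_le_sum {l : List ℕ} {c : ℕ} (h : ∀ x ∈ l, c ≤ x) : l.length * c ≤ l.sum := by
  induction l with
  | nil => simp
  | cons a t ih =>
    have h1 := h a (by simp)
    have h2 := ih fun x hx => h x (by simp [hx])
    simp only [List.length_cons, List.sum_cons]; nlinarith

lemma sum_map_add_const (l : List ℕ) (c : ℕ) : (l.map (· + c)).sum = l.sum + l.length * c := by
  induction l with
  | nil => simp
  | cons a t ih => simp only [List.map_cons, List.sum_cons, List.length_cons, ih]; ring

lemma sum_map_sub_const {l : List ℕ} {c : ℕ} (h : ∀ x ∈ l, c ≤ x) :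
    (l.map (· - c)).sum = l.sum - l.length * c := by
  induction l with
  | nil => simp
  | cons a t ih =>
    have h1 := h a (by simp)
    have h2 := ih fun x hx => h x (by simp [hx])
    have h3 := mul_length_le_sum (l := t) fun x hx => h x (List.mem_cons_of_mem a hx)
    simp only [List.map_cons, List.sum_cons, List.length_cons] at *
    have h4 : (t.length + 1) * c = t.length * c + c := by ring
    omega

lemma le_headI_of_sorted {l : List ℕ} (hs : l.Pairwise (· ≥ ·)) : ∀ x ∈ l, x ≤ l.headI := by
  cases l with
  | nil => simp
  | cons a t =>
    rw [List.pairwise_cons] at hs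
    intro x hx
    rcases List.mem_cons.mp hx with rfl | hx
    · simp
    · exact hs.1 x hx

lemma sorted_decomp {c : ℕ} : ∀ {l : List ℕ}, l.Pairwise (· ≥ ·) → (∀ x ∈ l, c ≤ x) →
    l = l.filter (fun x => decide (c < x)) ++
      List.replicate (l.length - (l.filter (fun x => decide (c < x))).length) c := by
  intro l
  induction l with
  | nil => simp
  | cons a t ih =>
    intro hs hc
    rw [List.pairwise_cons] at hs
    by_cases hca : c < a
    · have ht := ih hs.2 fun x hx => hc x (by simp [hx])
      rw [List.filter_cons_of_pos (by simpa using hca)]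
      simp only [List.length_cons, List.cons_append, List.length_cons]
      have hlen : (List.filter (fun x => decide (c < x)) t).length ≤ t.length :=
        List.length_filter_le _ _
      rw [show t.length + 1 - ((List.filter (fun x => decide (c < x)) t).length + 1)
          = t.length - (List.filter (fun x => decide (c < x)) t).length by omega]
      exact congrArg (a :: ·) ht
    · have hac : a = c := le_antisymm (by omega) (hc a (by simp))
      have hall : ∀ x ∈ a :: t, x = c := by
        intro x hx
        rcases List.mem_cons.mp hx with rfl | hx
        · exact hac
        · exact le_antisymm (hac ▸ hs.1 x hx) (hc x (by simp [hx]))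
      have hfil : List.filter (fun x => decide (c < x)) (a :: t) = [] := by
        rw [List.filter_eq_nil_iff]
        intro x hx
        simp [hall x hx]
      rw [hfil]
      simp only [List.nil_append, List.length_nil, Nat.sub_zero]
      exact List.eq_replicate_iff.mpr ⟨rfl, hall⟩

lemma finite_parts {m : ℕ} (P : List ℕ → Prop) :
    {l : List ℕ | IsPartitionOf m l ∧ P l}.Finite := by
  have h1 : {l : List ℕ | IsPartitionOf m l}.Finite := by
    rw [← Set.finite_coe_iff]
    refine Finite.of_injective (fun l : {l : List ℕ // IsPartitionOf m l} =>
      (⟨(↑l.1 : Multiset ℕ), fun hi => l.2.2.1 _ (by exact_mod_cast hi), by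
        rw [Multiset.sum_coe]; exact l.2.2.2⟩ : Nat.Partition m)) ?_
    rintro ⟨l1, hl1⟩ ⟨l2, hl2⟩ h
    simp only [Nat.Partition.mk.injEq, Multiset.coe_eq_coe] at h
    exact Subtype.ext (List.Perm.eq_of_pairwise (fun a b _ _ h1 h2 => le_antisymm h2 h1) hl1.1 hl2.1 h)
  exact h1.subset fun l hl => hl.1

end Aux

namespace Aux

def partsLe (j m : ℕ) : Set (List ℕ) := {l | IsPartitionOf m l ∧ ∀ x ∈ l, x ≤ j}
def lenLe (j m : ℕ) : Set (List ℕ) := {l | IsPartitionOf m l ∧ l.length ≤ j}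
noncomputable def pLe (j m : ℕ) : ℕ := (partsLe j m).ncard
noncomputable def pLen (j m : ℕ) : ℕ := (lenLe j m).ncard

lemma partsLe_finite (j m : ℕ) : (partsLe j m).Finite := finite_parts _
lemma lenLe_finite (j m : ℕ) : (lenLe j m).Finite := finite_parts _

lemma headI_mem {l : List ℕ} (h : l ≠ []) : l.headI ∈ l := by
  cases l with
  | nil => exact absurd rfl h
  | cons a t => simp

lemma part_of_zero {l : List ℕ} (h : IsPartitionOf 0 l) : l = [] := by
  cases l with
  | nil => rfl
  | cons a t =>
    have := h.2.1 a (by simp)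
    have := h.2.2
    simp only [List.sum_cons] at this
    omega

lemma nil_isPartition : IsPartitionOf 0 [] := ⟨List.Pairwise.nil, by simp, rfl⟩

lemma pLe_zero_right (j : ℕ) : pLe j 0 = 1 := by
  have : partsLe j 0 = {[]} := by
    ext l
    constructor
    · rintro ⟨h, -⟩; exact part_of_zero h
    · rintro rfl; exact ⟨nil_isPartition, by simp⟩
  rw [pLe, this, Set.ncard_singleton]

lemma pLen_zero_right (j : ℕ) : pLen j 0 = 1 := by
  have : lenLe j 0 = {[]} := by
    ext l
    constructor
    · rintro ⟨h, -⟩; exact part_of_zero h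
    · rintro rfl; exact ⟨nil_isPartition, by simp⟩
  rw [pLen, this, Set.ncard_singleton]

lemma pLe_zero_left {m : ℕ} (hm : 0 < m) : pLe 0 m = 0 := by
  have : partsLe 0 m = ∅ := by
    ext l
    simp only [Set.mem_empty_iff_false, iff_false]
    rintro ⟨h, hle⟩
    cases l with
    | nil =>
      have := h.2.2
      simp only [List.sum_nil] at this
      omega
    | cons a t => exact absurd (hle a (by simp)) (by have := h.2.1 a (by simp); omega)
  rw [pLe, this, Set.ncard_empty]

lemma pLen_zero_left {m : ℕ} (hm : 0 < m) : pLen 0 m = 0 := by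
  have : lenLe 0 m = ∅ := by
    ext l
    simp only [Set.mem_empty_iff_false, iff_false]
    rintro ⟨h, hle⟩
    rw [List.length_eq_zero_iff.mp (Nat.le_zero.mp hle)] at h
    have := h.2.2
    simp only [List.sum_nil] at this
    omega
  rw [pLen, this, Set.ncard_empty]

lemma pLe_succ (j m : ℕ) :
    pLe (j + 1) m = pLe j m + if j + 1 ≤ m then pLe (j + 1) (m - (j + 1)) else 0 := by
  set S2 : Set (List ℕ) := {l | l ∈ partsLe (j + 1) m ∧ l.headI = j + 1} with hS2
  have hsplit : partsLe (j + 1) m = partsLe j m ∪ S2 := by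
    ext l
    constructor
    · intro hl
      by_cases hh : l.headI = j + 1
      · exact Or.inr ⟨hl, hh⟩
      · refine Or.inl ⟨hl.1, fun x hx => ?_⟩
        have hne : l ≠ [] := by rintro rfl; simp at hx
        have h1 : x ≤ l.headI := le_headI_of_sorted hl.1.1 x hx
        have h2 : l.headI ≤ j + 1 := hl.2 _ (headI_mem hne)
        omega
    · rintro (hl | hl)
      · exact ⟨hl.1, fun x hx => le_trans (hl.2 x hx) (by omega)⟩
      · exact hl.1
  have hdisj : Disjoint (partsLe j m) S2 := by
    rw [Set.disjoint_left]
    rintro l ⟨hl, hle⟩ ⟨-, hh⟩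
    have hne : l ≠ [] := by rintro rfl; simp at hh
    have := hle _ (headI_mem hne)
    omega
  have hS2card : S2.ncard = if j + 1 ≤ m then pLe (j + 1) (m - (j + 1)) else 0 := by
    split_ifs with hjm
    · have himg : S2 = (fun l' => (j + 1) :: l') '' partsLe (j + 1) (m - (j + 1)) := by
        ext l
        constructor
        · rintro ⟨⟨⟨hs, hp, hsum⟩, hle⟩, hh⟩
          have hne : l ≠ [] := by rintro rfl; simp at hh
          obtain ⟨a, t, rfl⟩ := List.exists_cons_of_ne_nil hne
          simp only [List.headI_cons] at hh
          subst hh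
          rw [List.pairwise_cons] at hs
          refine ⟨t, ⟨⟨hs.2, fun x hx => hp x (by simp [hx]), ?_⟩,
            fun x hx => hle x (by simp [hx])⟩, rfl⟩
          simp only [List.sum_cons] at hsum
          omega
        · rintro ⟨t, ⟨⟨hs, hp, hsum⟩, hle⟩, rfl⟩
          refine ⟨⟨⟨?_, ?_, ?_⟩, ?_⟩, rfl⟩
          · exact List.pairwise_cons.mpr ⟨fun b hb => hle b hb, hs⟩
          · intro x hx
            rcases List.mem_cons.mp hx with rfl | hx
            · omega
            · exact hp x hx
          · simp only [List.sum_cons]; omega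
          · intro x hx
            simp only at hx
            rcases List.mem_cons.mp hx with rfl | hx
            · omega
            · exact hle x hx
      rw [himg, Set.ncard_image_of_injOn (Function.Injective.injOn List.cons_injective)]
      rfl
    · have : S2 = ∅ := by
        ext l
        simp only [Set.mem_empty_iff_false, iff_false]
        rintro ⟨⟨⟨hs, hp, hsum⟩, -⟩, hh⟩
        have hne : l ≠ [] := by rintro rfl; simp at hh
        have := List.single_le_sum (l := l) (fun x _ => Nat.zero_le x) _ (headI_mem hne)
        omega
      rw [this, Set.ncard_empty]
  rw [pLe, hsplit, Set.ncard_union_eq hdisj ((partsLe_finite j m))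
    (((partsLe_finite (j+1) m).subset (fun l hl => hl.1))), hS2card]
  rfl

end Aux

namespace Aux

noncomputable def padMap (j : ℕ) (l' : List ℕ) : List ℕ :=
  l'.map (· + 1) ++ List.replicate (j - l'.length) 1

lemma padMap_mem {j m : ℕ} (hjm : j + 1 ≤ m) {l' : List ℕ}
    (hl' : l' ∈ lenLe (j + 1) (m - (j + 1))) :
    padMap (j + 1) l' ∈ lenLe (j + 1) m ∧ (padMap (j + 1) l').length = j + 1 := by
  obtain ⟨⟨hs, hp, hsum⟩, hlen⟩ := hl'
  have hlen2 : (padMap (j + 1) l').length = j + 1 := by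
    simp only [padMap, List.length_append, List.length_map, List.length_replicate]
    omega
  refine ⟨⟨⟨?_, ?_, ?_⟩, le_of_eq hlen2⟩, hlen2⟩
  · rw [padMap, List.pairwise_append]
    refine ⟨List.Pairwise.map _ (fun a b hab => by omega) hs,
      List.pairwise_replicate.mpr (Or.inr (le_refl 1)), ?_⟩
    intro a ha b hb
    obtain ⟨x, -, rfl⟩ := List.mem_map.mp ha
    have : b = 1 := List.eq_of_mem_replicate hb
    omega
  · intro x hx
    rcases List.mem_append.mp hx with hx | hx
    · obtain ⟨y, -, rfl⟩ := List.mem_map.mp hx; omega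
    · rw [List.eq_of_mem_replicate hx]; omega
  · rw [padMap, List.sum_append, sum_map_add_const, List.sum_replicate, smul_eq_mul]
    omega

lemma pLen_succ (j m : ℕ) :
    pLen (j + 1) m = pLen j m + if j + 1 ≤ m then pLen (j + 1) (m - (j + 1)) else 0 := by
  set S2 : Set (List ℕ) := {l | l ∈ lenLe (j + 1) m ∧ l.length = j + 1} with hS2
  have hsplit : lenLe (j + 1) m = lenLe j m ∪ S2 := by
    ext l
    constructor
    · intro hl
      rcases Nat.lt_or_ge l.length (j + 1) with h | h
      · exact Or.inl ⟨hl.1, by omega⟩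
      · exact Or.inr ⟨hl, le_antisymm hl.2 h⟩
    · rintro (hl | hl)
      · exact ⟨hl.1, by have := hl.2; omega⟩
      · exact hl.1
  have hdisj : Disjoint (lenLe j m) S2 := by
    rw [Set.disjoint_left]
    rintro l ⟨-, hle⟩ ⟨-, hh⟩
    omega
  have hS2card : S2.ncard = if j + 1 ≤ m then pLen (j + 1) (m - (j + 1)) else 0 := by
    split_ifs with hjm
    · have himg : S2 = padMap (j + 1) '' lenLe (j + 1) (m - (j + 1)) := by
        ext l
        constructor
        · rintro ⟨⟨⟨hs, hp, hsum⟩, -⟩, hlen⟩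
          set F := l.filter (fun x => decide (1 < x)) with hF
          have hdec := sorted_decomp (c := 1) hs (fun x hx => hp x hx)
          rw [← hF] at hdec
          have hFmem : ∀ x ∈ F, 1 < x := by
            intro x hx
            have := List.of_mem_filter hx
            simpa using this
          have hFlen : F.length ≤ l.length := List.length_filter_le _ _
          have hFsorted : F.Pairwise (· ≥ ·) := List.Pairwise.filter _ hs
          have hFsum : l.sum = F.sum + (l.length - F.length) := by
            conv_lhs => rw [hdec]
            rw [List.sum_append, List.sum_replicate, smul_eq_mul]
            omega
          refine ⟨F.map (· - 1), ⟨⟨?_, ?_, ?_⟩, ?_⟩, ?_⟩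
          · exact List.Pairwise.map _ (fun a b hab => by omega) hFsorted
          · intro x hx
            obtain ⟨y, hy, rfl⟩ := List.mem_map.mp hx
            have := hFmem y hy
            omega
          · rw [sum_map_sub_const (fun x hx => le_of_lt (hFmem x hx))]
            have h1 : F.length * 1 ≤ F.sum := mul_length_le_sum fun x hx => by
              have := hFmem x hx; omega
            omega
          · rw [List.length_map]; omega
          · rw [padMap, List.map_map]
            have hmm : F.map ((· + 1) ∘ (· - 1)) = F := by
              rw [show ((· + 1) ∘ (· - 1)) = fun x : ℕ => x - 1 + 1 from rfl]
              rw [List.map_congr_left (g := id) (fun x hx => by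
                have := hFmem x hx; simp only [id_eq]; omega)]
              exact List.map_id F
            rw [hmm, List.length_map]
            rw [show j + 1 - F.length = l.length - F.length by omega]
            exact hdec.symm
        · rintro ⟨l', hl', rfl⟩
          obtain ⟨h1, h2⟩ := padMap_mem hjm hl'
          exact ⟨⟨h1.1, h1.2⟩, h2⟩
      rw [himg]
      rw [Set.ncard_image_of_injOn ?inj]
      · rfl
      case inj =>
        rintro l1 ⟨⟨-, hp1, -⟩, -⟩ l2 ⟨⟨-, hp2, -⟩, -⟩ h
        have key : ∀ l : List ℕ, (∀ x ∈ l, 0 < x) →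
            (padMap (j + 1) l).filter (fun x => decide (1 < x)) = l.map (· + 1) := by
          intro l hl
          rw [padMap, List.filter_append]
          rw [List.filter_eq_self.mpr (fun a ha => by
            obtain ⟨y, hy, rfl⟩ := List.mem_map.mp ha
            simpa using by have := hl y hy; omega)]
          rw [List.filter_eq_nil_iff.mpr (fun a ha => by
            rw [List.eq_of_mem_replicate ha]; simp)]
          simp
        have := key l1 hp1
        rw [h, key l2 hp2] at this
        exact List.map_injective_iff.mpr (fun a b hab => by omega) this.symm
    · have : S2 = ∅ := by
        ext l
        simp only [Set.mem_empty_iff_false, iff_false]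
        rintro ⟨⟨⟨-, hp, hsum⟩, -⟩, hlen⟩
        have := length_le_sum' hp
        omega
      rw [this, Set.ncard_empty]
  rw [pLen, hsplit, Set.ncard_union_eq hdisj (lenLe_finite j m)
    (((lenLe_finite (j+1) m).subset (fun l hl => hl.1))), hS2card]
  rfl

end Aux

namespace Aux

open PowerSeries

lemma qPoch_succ (j : ℕ) : qPoch (j + 1) = qPoch j * (1 - X ^ (j + 1)) :=
  Finset.prod_range_succ _ j

lemma constantCoeff_qPoch (j : ℕ) : constantCoeff (qPoch j) = 1 := by
  rw [qPoch, map_prod]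
  refine Finset.prod_eq_one fun m _ => ?_
  rw [map_sub, map_one, map_pow, constantCoeff_X]
  simp

lemma qPoch_mul_mk (p : ℕ → ℕ → ℕ) (h00 : p 0 0 = 1) (h0 : ∀ m, 0 < m → p 0 m = 0)
    (hrec : ∀ j m, p (j + 1) m = p j m + if j + 1 ≤ m then p (j + 1) (m - (j + 1)) else 0) :
    ∀ j, qPoch j * PowerSeries.mk (fun m => (p j m : ℤ)) = 1 := by
  intro j
  induction j with
  | zero =>
    have h1 : qPoch 0 = 1 := by simp [qPoch]
    have h2 : PowerSeries.mk (fun m => (p 0 m : ℤ)) = 1 := by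
      ext n
      rw [coeff_mk, PowerSeries.coeff_one]
      rcases Nat.eq_zero_or_pos n with rfl | hn
      · simp [h00]
      · rw [h0 n hn, if_neg (by omega : ¬ n = 0)]
        simp
    rw [h1, h2, one_mul]
  | succ j ih =>
    have hstep : (1 - X ^ (j + 1)) * PowerSeries.mk (fun m => (p (j + 1) m : ℤ))
        = PowerSeries.mk (fun m => (p j m : ℤ)) := by
      ext n
      rw [sub_mul, one_mul, map_sub, coeff_X_pow_mul']
      simp only [coeff_mk]
      rw [hrec j n]
      split_ifs with h <;> push_cast <;> ring
    calc qPoch (j + 1) * PowerSeries.mk (fun m => (p (j + 1) m : ℤ))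
        = qPoch j * ((1 - X ^ (j + 1)) * PowerSeries.mk (fun m => (p (j + 1) m : ℤ))) := by
          rw [qPoch_succ]; ring
      _ = qPoch j * PowerSeries.mk (fun m => (p j m : ℤ)) := by rw [hstep]
      _ = 1 := ih

lemma invOfUnit_eq_of_mul {f g : PowerSeries ℤ} (hc : constantCoeff f = 1)
    (h : f * g = 1) : f.invOfUnit 1 = g := by
  have h2 := PowerSeries.mul_invOfUnit f 1 (by simpa using hc)
  calc f.invOfUnit 1 = (g * f) * f.invOfUnit 1 := by rw [mul_comm g f, h, one_mul]
    _ = g * (f * f.invOfUnit 1) := by ring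
    _ = g := by rw [h2, mul_one]

lemma invOfUnit_qPoch_pLe (j : ℕ) :
    (qPoch j).invOfUnit 1 = PowerSeries.mk (fun m => (pLe j m : ℤ)) :=
  invOfUnit_eq_of_mul (constantCoeff_qPoch j)
    (qPoch_mul_mk pLe (pLe_zero_right 0) (fun m hm => pLe_zero_left hm) pLe_succ j)

lemma invOfUnit_qPoch_pLen (j : ℕ) :
    (qPoch j).invOfUnit 1 = PowerSeries.mk (fun m => (pLen j m : ℤ)) :=
  invOfUnit_eq_of_mul (constantCoeff_qPoch j)
    (qPoch_mul_mk pLen (pLen_zero_right 0) (fun m hm => pLen_zero_left hm) pLen_succ j)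

lemma coeff_term (k i n : ℕ) :
    (PowerSeries.coeff n) ((X : PowerSeries ℤ) ^ (i * (i + k)) *
        (qPoch (i + k)).invOfUnit 1 * (qPoch (i - 1)).invOfUnit 1)
    = if i * (i + k) ≤ n then
        ∑ p ∈ Finset.HasAntidiagonal.antidiagonal (n - i * (i + k)), (pLe (i + k) p.1 : ℤ) * (pLen (i - 1) p.2)
      else 0 := by
  rw [invOfUnit_qPoch_pLe, invOfUnit_qPoch_pLen, mul_assoc, coeff_X_pow_mul']
  split_ifs with h
  · rw [PowerSeries.coeff_mul]
    refine Finset.sum_congr rfl fun p _ => ?_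
    rw [coeff_mk, coeff_mk]
  · rfl

end Aux

namespace Aux

def FixAt (k i : ℕ) (l : List ℕ) : Prop := ∃ h : i - 1 < l.length, l[i - 1]'h = i + k

def Ai (k n i : ℕ) : Set (List ℕ) := {l | IsPartitionOf n l ∧ FixAt k i l}

lemma Ai_finite (k n i : ℕ) : (Ai k n i).Finite := finite_parts _

lemma sorted_getElem_le {l : List ℕ} (hs : l.Pairwise (· ≥ ·)) {a b : ℕ} (hab : a ≤ b)
    (hb : b < l.length) : l[b] ≤ l[a]'(lt_of_le_of_lt hab hb) := by
  rcases eq_or_lt_of_le hab with rfl | h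
  · exact le_refl _
  · exact List.pairwise_iff_getElem.mp hs a b _ hb h

lemma mem_take_ge {l : List ℕ} (hs : l.Pairwise (· ≥ ·)) {t s : ℕ} (hts : t ≤ s + 1)
    (hsl : s < l.length) : ∀ x ∈ l.take t, l[s] ≤ x := by
  intro x hx
  rw [List.mem_iff_get] at hx
  obtain ⟨j, rfl⟩ := hx
  have hj : (j : ℕ) < t := lt_of_lt_of_le j.isLt (by simp [List.length_take])
  have heq : (l.take t).get j = l[(j : ℕ)]'(by omega) := by
    simp [List.get_eq_getElem, List.getElem_take]
  rw [heq]
  exact sorted_getElem_le hs (by omega) hsl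

lemma mem_drop_le {l : List ℕ} (hs : l.Pairwise (· ≥ ·)) {t : ℕ} (ht : t < l.length) :
    ∀ x ∈ l.drop (t + 1), x ≤ l[t] := by
  intro x hx
  rw [List.mem_iff_get] at hx
  obtain ⟨j, rfl⟩ := hx
  have hj : (t + 1) + (j : ℕ) < l.length := by
    have := j.isLt
    simp only [List.length_drop] at this
    omega
  have heq : (l.drop (t + 1)).get j = l[(t + 1) + (j : ℕ)]'hj := by
    simp [List.get_eq_getElem, List.getElem_drop]
  rw [heq]
  exact sorted_getElem_le hs (by omega) hj

lemma mul_split {x y : ℕ} (c : ℕ) (h : x ≤ y) : x * c + (y - x) * c = y * c := by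
  rw [← Nat.add_mul]
  congr 1
  omega

def phi (c i : ℕ) (q : List ℕ × List ℕ) : List ℕ :=
  (q.2.map (· + c) ++ List.replicate (i - q.2.length) c) ++ q.1

lemma phi_spec {k n i a b : ℕ} (hi : 1 ≤ i) (he : i * (i + k) ≤ n)
    (hab : a + b = n - i * (i + k)) {μ ν : List ℕ}
    (hμ : μ ∈ partsLe (i + k) a) (hν : ν ∈ lenLe (i - 1) b) :
    phi (i + k) i (μ, ν) ∈ Ai k n i ∧ (phi (i + k) i (μ, ν)).drop i = μ ∧
      (phi (i + k) i (μ, ν)).take (i - 1)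
        = ν.map (· + (i + k)) ++ List.replicate (i - 1 - ν.length) (i + k) := by
  obtain ⟨⟨hμs, hμp, hμsum⟩, hμle⟩ := hμ
  obtain ⟨⟨hνs, hνp, hνsum⟩, hνlen⟩ := hν
  have hνi : ν.length ≤ i - 1 := hνlen
  have hFlen : (ν.map (· + (i + k)) ++ List.replicate (i - ν.length) (i + k)).length = i := by
    simp only [List.length_append, List.length_map, List.length_replicate]
    omega
  have hmemA : ∀ x ∈ ν.map (· + (i + k)), i + k + 1 ≤ x := by
    intro x hx
    obtain ⟨y, hy, rfl⟩ := List.mem_map.mp hx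
    have := hνp y hy
    omega
  have hphi : phi (i + k) i (μ, ν)
      = (ν.map (· + (i + k)) ++ List.replicate (i - ν.length) (i + k)) ++ μ := rfl
  constructor
  · refine ⟨⟨?_, ?_, ?_⟩, ?_⟩
    · rw [hphi, List.pairwise_append]
      refine ⟨List.pairwise_append.mpr ⟨List.Pairwise.map _ (fun x y hxy => by omega) hνs,
        List.pairwise_replicate.mpr (Or.inr (le_refl _)), ?_⟩, hμs, ?_⟩
      · intro x hx y hy
        have h1 := hmemA x hx
        have h2 := List.eq_of_mem_replicate hy
        omega
      · intro x hx y hy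
        have h2 := hμle y hy
        rcases List.mem_append.mp hx with hx | hx
        · have := hmemA x hx; omega
        · have := List.eq_of_mem_replicate hx; omega
    · intro x hx
      rw [hphi] at hx
      rcases List.mem_append.mp hx with hx | hx
      · rcases List.mem_append.mp hx with hx | hx
        · have := hmemA x hx; omega
        · have := List.eq_of_mem_replicate hx; omega
      · exact hμp x hx
    · rw [hphi, List.sum_append, List.sum_append, sum_map_add_const, List.sum_replicate,
        smul_eq_mul]
      have hms := mul_split (x := ν.length) (y := i) (i + k) (by omega)
      omega
    · refine ⟨?_, ?_⟩
      · rw [hphi, List.length_append, hFlen]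
        omega
      · simp only [hphi]
        rw [List.getElem_append_left (by rw [hFlen]; omega)]
        rw [List.getElem_append_right (by rw [List.length_map]; omega)]
        exact List.getElem_replicate _
  constructor
  · rw [hphi]; exact List.drop_left' hFlen
  · rw [hphi, List.take_append, List.take_append,
      List.take_of_length_le (show (ν.map (· + (i + k))).length ≤ i - 1 by
        rw [List.length_map]; omega),
      List.take_replicate, List.length_map, List.length_append, List.length_map,
      List.length_replicate]
    rw [show i - 1 - (ν.length + (i - ν.length)) = 0 by omega, List.take_zero, List.append_nil,
      show (i - 1 - ν.length) ⊓ (i - ν.length) = i - 1 - ν.length by omega]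

lemma fiber_eq {k n i a b : ℕ} (hi : 1 ≤ i) (he : i * (i + k) ≤ n)
    (hab : a + b = n - i * (i + k)) :
    {l | l ∈ Ai k n i ∧ (l.drop i).sum = a ∧ (l.take (i - 1)).sum - (i - 1) * (i + k) = b}
      = phi (i + k) i '' (partsLe (i + k) a ×ˢ lenLe (i - 1) b) := by
  ext l
  constructor
  · rintro ⟨⟨⟨hs, hp, hsum⟩, h1, hget⟩, hA, hB⟩
    have hil : i ≤ l.length := by omega
    have hTlen : (l.take (i - 1)).length = i - 1 := by
      rw [List.length_take]; omega
    have hTge : ∀ x ∈ l.take (i - 1), i + k ≤ x := by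
      intro x hx
      have := mem_take_ge hs (by omega : i - 1 ≤ (i - 1) + 1) h1 x hx
      omega
    have hTsorted : (l.take (i - 1)).Pairwise (· ≥ ·) :=
      List.Pairwise.sublist (List.take_sublist _ _) hs
    have hdec := sorted_decomp (c := i + k) hTsorted hTge
    obtain ⟨G, hG⟩ : ∃ G, G = (l.take (i - 1)).filter (fun x => decide (i + k < x)) := ⟨_, rfl⟩
    rw [← hG] at hdec
    have hGmem : ∀ x ∈ G, i + k < x := by
      intro x hx
      rw [hG] at hx
      have := List.of_mem_filter hx
      simpa using this
    have hGlen : G.length ≤ i - 1 := by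
      have h := List.length_filter_le (fun x => decide (i + k < x)) (l.take (i - 1))
      rw [← hG, hTlen] at h
      exact h
    have hGsorted : G.Pairwise (· ≥ ·) := hG ▸ List.Pairwise.filter _ hTsorted
    have hTsum : (l.take (i - 1)).sum = G.sum + (i - 1 - G.length) * (i + k) := by
      conv_lhs => rw [hdec]
      rw [List.sum_append, List.sum_replicate, smul_eq_mul, hTlen]
    have hTge2 : (i - 1) * (i + k) ≤ (l.take (i - 1)).sum := by
      have := mul_length_le_sum hTge
      rwa [hTlen] at this
    have hGge : G.length * (i + k) ≤ G.sum :=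
      mul_length_le_sum fun x hx => le_of_lt (hGmem x hx)
    have hDle : ∀ x ∈ l.drop i, x ≤ i + k := by
      intro x hx
      rw [show i = (i - 1) + 1 by omega] at hx
      have := mem_drop_le hs h1 x hx
      omega
    refine ⟨(l.drop i, G.map (· - (i + k))), Set.mem_prod.mpr ⟨⟨⟨?_, ?_, hA⟩, hDle⟩,
      ⟨⟨?_, ?_, ?_⟩, ?_⟩⟩, ?_⟩
    · exact List.Pairwise.sublist (List.drop_sublist _ _) hs
    · exact fun x hx => hp x (List.mem_of_mem_drop hx)
    · exact List.Pairwise.map _ (fun x y hxy => by omega) hGsorted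
    · intro x hx
      obtain ⟨y, hy, rfl⟩ := List.mem_map.mp hx
      have := hGmem y hy
      omega
    · rw [sum_map_sub_const fun x hx => le_of_lt (hGmem x hx)]
      have hms := mul_split (x := G.length) (y := i - 1) (i + k) hGlen
      omega
    · rw [List.length_map]; exact hGlen
    · have hmap : (G.map (· - (i + k))).map (· + (i + k)) = G := by
        rw [List.map_map]
        rw [List.map_congr_left (g := id) (fun x hx => by
          have := hGmem x hx; simp only [Function.comp_apply, id_eq]; omega)]
        exact List.map_id G
      have hlen2 : (G.map (· - (i + k))).length = G.length := List.length_map _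
      have hphi : phi (i + k) i (l.drop i, G.map (· - (i + k)))
          = (G ++ List.replicate (i - G.length) (i + k)) ++ l.drop i := by
        rw [phi]
        simp only
        rw [hmap, hlen2]
      rw [hphi]
      have hrep : List.replicate (i - G.length) (i + k)
          = List.replicate (i - 1 - G.length) (i + k) ++ [i + k] := by
        rw [← List.replicate_succ']
        congr 1
        omega
      have hdropeq : l.drop (i - 1) = (i + k) :: l.drop i := by
        have := List.drop_eq_getElem_cons h1
        rw [hget] at this
        rw [show i - 1 + 1 = i by omega] at this
        exact this
      calc (G ++ List.replicate (i - G.length) (i + k)) ++ l.drop i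
          = (G ++ List.replicate (i - 1 - G.length) (i + k)) ++ ((i + k) :: l.drop i) := by
            rw [hrep]; simp [List.append_assoc]
        _ = l.take (i - 1) ++ l.drop (i - 1) := by
            rw [← hdropeq]
            congr 1
            rw [hdec, hTlen]
        _ = l := List.take_append_drop _ _
  · rintro ⟨⟨μ, ν⟩, hq, rfl⟩
    rw [Set.mem_prod] at hq
    obtain ⟨h1, h2, h3⟩ := phi_spec hi he hab hq.1 hq.2
    obtain ⟨⟨-, -, hμsum⟩, -⟩ := hq.1
    obtain ⟨⟨-, -, hνsum⟩, hνlen⟩ := hq.2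
    refine ⟨h1, by rw [h2]; exact hμsum, ?_⟩
    rw [h3, List.sum_append, sum_map_add_const, List.sum_replicate, smul_eq_mul]
    have hms := mul_split (x := (μ, ν).2.length) (y := i - 1) (i + k) hνlen
    omega

lemma ncard_prod' {α β : Type*} (s : Set α) (t : Set β) :
    (s ×ˢ t).ncard = s.ncard * t.ncard := by
  rw [← Nat.card_coe_set_eq, ← Nat.card_coe_set_eq, ← Nat.card_coe_set_eq,
    Nat.card_congr (Equiv.Set.prod s t), Nat.card_prod]

lemma filter_toFinset_card {α : Type*} {s : Set α} (hs : s.Finite) (p : α → Prop)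
    [DecidablePred p] :
    (hs.toFinset.filter p).card = {x | x ∈ s ∧ p x}.ncard := by
  rw [← Set.ncard_coe_finset, Finset.coe_filter]
  congr 1
  ext x
  simp [Set.Finite.mem_toFinset]

lemma phi_injOn {k n i a b : ℕ} (hi : 1 ≤ i) (he : i * (i + k) ≤ n)
    (hab : a + b = n - i * (i + k)) :
    Set.InjOn (phi (i + k) i) (partsLe (i + k) a ×ˢ lenLe (i - 1) b) := by
  rintro ⟨μ1, ν1⟩ hq1 ⟨μ2, ν2⟩ hq2 h
  rw [Set.mem_prod] at hq1 hq2
  obtain ⟨-, h12, h13⟩ := phi_spec hi he hab hq1.1 hq1.2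
  obtain ⟨-, h22, h23⟩ := phi_spec hi he hab hq2.1 hq2.2
  dsimp only at h12 h13 h22 h23 hq1 hq2
  have hμ : μ1 = μ2 := by rw [← h12, ← h22, h]
  have hfil : ∀ ν : List ℕ, (∀ x ∈ ν, 0 < x) →
      (ν.map (· + (i + k)) ++ List.replicate (i - 1 - ν.length) (i + k)).filter
        (fun x => decide (i + k < x)) = ν.map (· + (i + k)) := by
    intro ν hν
    rw [List.filter_append, List.filter_eq_self.mpr (fun x hx => by
        obtain ⟨y, hy, rfl⟩ := List.mem_map.mp hx
        have := hν y hy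
        simpa using by omega),
      List.filter_eq_nil_iff.mpr (fun x hx => by
        rw [List.eq_of_mem_replicate hx]; simp), List.append_nil]
  have hν : ν1 = ν2 := by
    have e1 := hfil ν1 hq1.2.1.2.1
    have e2 := hfil ν2 hq2.2.1.2.1
    rw [← h13, h, h23] at e1
    rw [e2] at e1
    exact List.map_injective_iff.mpr (fun x y hxy => by omega) e1.symm
  rw [hμ, hν]

lemma Ai_card (k n i : ℕ) (hi : 1 ≤ i) :
    (Ai k n i).ncard = if i * (i + k) ≤ n then
      ∑ p ∈ Finset.HasAntidiagonal.antidiagonal (n - i * (i + k)), pLe (i + k) p.1 * pLen (i - 1) p.2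
    else 0 := by
  classical
  split_ifs with he
  · have hfin := Ai_finite k n i
    have hcard : (Ai k n i).ncard = hfin.toFinset.card := by
      rw [← Set.ncard_coe_finset, hfin.coe_toFinset]
    rw [hcard]
    rw [Finset.card_eq_sum_card_fiberwise
      (f := fun l => ((l.drop i).sum, (l.take (i - 1)).sum - (i - 1) * (i + k)))
      (t := Finset.HasAntidiagonal.antidiagonal (n - i * (i + k))) ?maps]
    case maps =>
      intro l hl
      rw [Finset.mem_coe, Set.Finite.mem_toFinset] at hl
      obtain ⟨⟨hs, hp, hsum⟩, h1, hget⟩ := hl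
      rw [Finset.mem_coe, Finset.HasAntidiagonal.mem_antidiagonal]
      dsimp only
      have hTlen : (l.take (i - 1)).length = i - 1 := by
        rw [List.length_take]; omega
      have hTge : ∀ x ∈ l.take (i - 1), i + k ≤ x := by
        intro x hx
        have := mem_take_ge hs (by omega : i - 1 ≤ (i - 1) + 1) h1 x hx
        omega
      have hTge2 : (i - 1) * (i + k) ≤ (l.take (i - 1)).sum := by
        have := mul_length_le_sum hTge
        rwa [hTlen] at this
      have hdropeq : l.drop (i - 1) = (i + k) :: l.drop i := by
        have := List.drop_eq_getElem_cons h1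
        rw [hget, show i - 1 + 1 = i by omega] at this
        exact this
      have hsplit : (l.take (i - 1)).sum + (l.drop (i - 1)).sum = l.sum :=
        List.sum_take_add_sum_drop l (i - 1)
      rw [hdropeq, List.sum_cons] at hsplit
      have hms := mul_split (x := i - 1) (y := i) (i + k) (by omega)
      have h1m : (i - (i - 1)) * (i + k) = i + k := by
        rw [show i - (i - 1) = 1 by omega, one_mul]
      omega
    refine Finset.sum_congr rfl fun p hp => ?_
    obtain ⟨a, b⟩ := p
    rw [Finset.HasAntidiagonal.mem_antidiagonal] at hp
    dsimp only at hp ⊢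
    rw [filter_toFinset_card]
    have hfib : {l | l ∈ Ai k n i ∧
        ((l.drop i).sum, (l.take (i - 1)).sum - (i - 1) * (i + k)) = (a, b)}
        = phi (i + k) i '' (partsLe (i + k) a ×ˢ lenLe (i - 1) b) := by
      rw [← fiber_eq hi he hp]
      ext l
      simp only [Set.mem_setOf_eq, Prod.mk.injEq]
      try tauto
    rw [hfib, Set.ncard_image_of_injOn (phi_injOn hi he hp), ncard_prod']
    rfl
  · have : Ai k n i = ∅ := by
      ext l
      simp only [Set.mem_empty_iff_false, iff_false]
      rintro ⟨⟨hs, hp, hsum⟩, h1, hget⟩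
      have hil : i ≤ l.length := by omega
      have hTlen : (l.take i).length = i := by
        rw [List.length_take]; omega
      have hTge : ∀ x ∈ l.take i, i + k ≤ x := by
        intro x hx
        have := mem_take_ge hs (show i ≤ (i - 1) + 1 by omega) h1 x hx
        omega
      have hTge2 : i * (i + k) ≤ (l.take i).sum := by
        have := mul_length_le_sum hTge
        rwa [hTlen] at this
      have hsplit : (l.take i).sum + (l.drop i).sum = l.sum :=
        List.sum_take_add_sum_drop l i
      omega
    rw [this, Set.ncard_empty]

end Aux

namespace Aux

lemma hasK_iff (k : ℕ) (l : List ℕ) :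
    HasKFixedPoint (k : ℤ) l ↔ ∃ i, 1 ≤ i ∧ FixAt k i l := by
  constructor
  · rintro ⟨i0, hi0⟩
    refine ⟨i0.val + 1, by omega, by simpa using i0.isLt, ?_⟩
    have : l.get i0 = i0.val + 1 + k := by exact_mod_cast hi0
    simpa [List.get_eq_getElem] using this
  · rintro ⟨i, hi1, h, hget⟩
    refine ⟨⟨i - 1, h⟩, ?_⟩
    simp only [List.get_eq_getElem, hget]
    have : ((i - 1 : ℕ) : ℤ) = (i : ℤ) - 1 := by omega
    rw [this]
    push_cast
    ring

lemma fix_unique {l : List ℕ} (hs : l.Pairwise (· ≥ ·)) {k i j : ℕ} (hi : 1 ≤ i) (hj : 1 ≤ j)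
    (h1 : FixAt k i l) (h2 : FixAt k j l) : i = j := by
  obtain ⟨hil, hig⟩ := h1
  obtain ⟨hjl, hjg⟩ := h2
  rcases lt_trichotomy i j with h | h | h
  · have := sorted_getElem_le hs (show i - 1 ≤ j - 1 by omega) hjl
    simp only [hig, hjg] at this
    omega
  · exact h
  · have := sorted_getElem_le hs (show j - 1 ≤ i - 1 by omega) hil
    simp only [hig, hjg] at this
    omega

lemma fixSet_eq {k i : ℕ} {l : List ℕ} (hs : l.Pairwise (· ≥ ·)) (hi : 1 ≤ i)
    (hfix : FixAt k i l) : {j | 1 ≤ j ∧ FixAt k j l} = {i} := by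
  ext j
  simp only [Set.mem_setOf_eq, Set.mem_singleton_iff]
  constructor
  · rintro ⟨hj1, hjf⟩
    exact fix_unique hs hj1 hi hjf hfix
  · rintro rfl
    exact ⟨hi, hfix⟩

lemma fk_eq_sum (k n : ℕ) : fk (k : ℤ) n = ∑ i ∈ Finset.Icc 1 n, (Ai k n i).ncard := by
  classical
  have hfin : {l | IsPartitionOf n l ∧ HasKFixedPoint (k : ℤ) l}.Finite := finite_parts _
  have hcard : fk (k : ℤ) n = hfin.toFinset.card := by
    rw [fk, ← Set.ncard_coe_finset, hfin.coe_toFinset]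
  rw [hcard]
  rw [Finset.card_eq_sum_card_fiberwise
    (f := fun l => sInf {i | 1 ≤ i ∧ FixAt k i l}) (t := Finset.Icc 1 n) ?maps]
  case maps =>
    intro l hl
    rw [Finset.mem_coe, Set.Finite.mem_toFinset] at hl
    obtain ⟨hP, hK⟩ := hl
    obtain ⟨i, hi1, hfix⟩ := (hasK_iff k l).mp hK
    dsimp only
    rw [fixSet_eq hP.1 hi1 hfix, csInf_singleton, Finset.mem_coe, Finset.mem_Icc]
    obtain ⟨h, -⟩ := hfix
    have h2 := length_le_sum' hP.2.1
    have h3 := hP.2.2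
    omega
  · refine Finset.sum_congr rfl fun i hi => ?_
    rw [Finset.mem_Icc] at hi
    rw [filter_toFinset_card]
    congr 1
    ext l
    simp only [Set.mem_setOf_eq, Ai]
    constructor
    · rintro ⟨⟨hP, hK⟩, hkey⟩
      obtain ⟨j, hj1, hjf⟩ := (hasK_iff k l).mp hK
      rw [fixSet_eq hP.1 hj1 hjf, csInf_singleton] at hkey
      exact ⟨hP, hkey ▸ hjf⟩
    · rintro ⟨hP, hfix⟩
      refine ⟨⟨hP, (hasK_iff k l).mpr ⟨i, hi.1, hfix⟩⟩, ?_⟩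
      rw [fixSet_eq hP.1 hi.1 hfix]
      exact csInf_singleton i

end Aux


theorem stmt11 (k : ℕ) (n : ℕ) :
    (fk (k : ℤ) n : ℤ) = ∑ i ∈ Finset.Icc 1 n, (PowerSeries.coeff n)
      ((PowerSeries.X : PowerSeries ℤ) ^ (i * (i + k)) *
        (qPoch (i + k)).invOfUnit 1 * (qPoch (i - 1)).invOfUnit 1) := by
  rw [Aux.fk_eq_sum]
  push_cast
  refine Finset.sum_congr rfl fun i hi => ?_
  rw [Finset.mem_Icc] at hi
  rw [Aux.coeff_term k i n, Aux.Ai_card k n i hi.1]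
  split_ifs with he
  · push_cast
    rfl
  · simp
end
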